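/- arXiv:1207.2128 — 9 statements merged into one kernel-verified Lean document; each statement's English description precedes it below -/
import Mathlib

section
/- Let κ be an uncountable regular cardinal with κ^{<κ} = κ. Let D be a co-meager subset of 2^κ (the space of functions κ → 2 with the bounded topology, generated by basic open sets N_p = {η : η↾α = p} for p : α → 2, α < κ; co-meager means containing an intersection of at most κ many dense open sets). Then for any α < κ and any p, q : α → 2, there exists η : [α, κ) → 2 such that both the concatenation p⌢η and q⌢η belong to D. -/
open Cardinal Set
open scoped Classical

noncomputable section

/-- The bounded topology on the generalized Cantor space `2^κ` (functions `Ordinal → X`,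
where only values below `κ` matter), generated by the basic open sets
`N_p = {η | η↾α = p}` for `α < κ`. -/
def gbTop (κ : Cardinal) (X : Type*) : TopologicalSpace (Ordinal → X) :=
  TopologicalSpace.generateFrom
    {s | ∃ α < κ.ord, ∃ p : Ordinal → X, s = {η | ∀ β < α, η β = p β}}

/-- `D` is co-meager: it contains an intersection of at most `κ` many dense open sets. -/
def Comeager (κ : Cardinal) (D : Set (Ordinal → Bool)) : Prop :=
  ∃ (ι : Type) (F : ι → Set (Ordinal → Bool)),
    Cardinal.mk ι ≤ κ ∧
    (∀ i, @IsOpen _ (gbTop κ Bool) (F i) ∧ @Dense _ (gbTop κ Bool) (F i)) ∧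
    (⋂ i, F i) ⊆ D

namespace CCT

universe u

variable (κ : Cardinal.{u}) (α : Ordinal.{u}) (p q : Ordinal.{u} → Bool)

/-- Replace the head (below `α`) by `q`. -/
def swapq (η : Ordinal → Bool) : Ordinal → Bool := fun β => if β < α then q β else η β

/-- Every open set containing a point contains a basic neighborhood of that point. -/
lemma open_basic (hk0 : (0 : Ordinal) < κ.ord) {U : Set (Ordinal → Bool)}
    (hU : @IsOpen _ (gbTop κ Bool) U) {η : Ordinal → Bool} (hη : η ∈ U) :
    ∃ b < κ.ord, ∀ ν : Ordinal → Bool, (∀ β < b, ν β = η β) → ν ∈ U := by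
  have hU' : TopologicalSpace.GenerateOpen
      {s | ∃ a < κ.ord, ∃ r : Ordinal → Bool, s = {η : Ordinal → Bool | ∀ β < a, η β = r β}}
      U := hU
  clear hU
  revert hη
  induction hU' with
  | basic s hs =>
    intro hη
    obtain ⟨a, ha, r, rfl⟩ := hs
    exact ⟨a, ha, fun ν hν β hβ => (hν β hβ).trans (hη β hβ)⟩
  | univ =>
    intro _
    exact ⟨0, hk0, fun ν _ => trivial⟩
  | inter s t _ _ ihs iht =>
    intro hη
    obtain ⟨b1, hb1, h1⟩ := ihs hη.1
    obtain ⟨b2, hb2, h2⟩ := iht hη.2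
    exact ⟨max b1 b2, max_lt hb1 hb2, fun ν hν =>
      ⟨h1 ν fun β hβ => hν β (hβ.trans_le (le_max_left _ _)),
       h2 ν fun β hβ => hν β (hβ.trans_le (le_max_right _ _))⟩⟩
  | sUnion T _ ih =>
    intro hη
    obtain ⟨t, htT, hηt⟩ := hη
    obtain ⟨b, hb, h⟩ := ih t htT hηt
    exact ⟨b, hb, fun ν hν => ⟨t, htT, h ν hν⟩⟩

lemma isOpen_basic {b : Ordinal} (hb : b < κ.ord) (s : Ordinal → Bool) :
    @IsOpen _ (gbTop κ Bool) {η : Ordinal → Bool | ∀ β < b, η β = s β} :=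
  TopologicalSpace.isOpen_generateFrom_of_mem ⟨b, hb, s, rfl⟩

/-- Density: every condition extends to a condition deciding membership in a dense open set. -/
lemma dense_extend {F : Set (Ordinal → Bool)}
    (hFo : @IsOpen _ (gbTop κ Bool) F) (hFd : @Dense _ (gbTop κ Bool) F)
    {b : Ordinal} (hb : b < κ.ord) (s : Ordinal → Bool) :
    ∃ b', b ≤ b' ∧ b' < κ.ord ∧ ∃ s' : Ordinal → Bool, (∀ β < b, s' β = s β) ∧
      ∀ ν : Ordinal → Bool, (∀ β < b', ν β = s' β) → ν ∈ F := by
  letI := gbTop κ Bool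
  have hNo : IsOpen {η : Ordinal → Bool | ∀ β < b, η β = s β} := isOpen_basic κ hb s
  obtain ⟨η, hηF, hηN⟩ := hFd.exists_mem_open hNo ⟨s, fun β _ => rfl⟩
  obtain ⟨b1, hb1, h1⟩ := open_basic κ ((zero_le (a := b)).trans_lt hb) hFo hηF
  exact ⟨max b b1, le_max_left _ _, max_lt hb hb1, η, fun β hβ => hηN β hβ,
    fun ν hν => h1 ν fun β hβ => hν β (hβ.trans_le (le_max_right _ _))⟩

/-- The invariant for the recursive construction: `x = (b, s)` is a condition of length
`b ≥ α`, starting with `p`, extending all previously chosen conditions, and forcing both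
itself and its `q`-swap into `F' γ`. -/
def Good (F' : Ordinal.{u} → Set (Ordinal.{u} → Bool)) (γ : Ordinal.{u})
    (f : Ordinal.{u} → Ordinal.{u} × (Ordinal.{u} → Bool)) (x : Ordinal.{u} × (Ordinal.{u} → Bool)) : Prop :=
  α ≤ x.1 ∧ x.1 < κ.ord ∧ (∀ β < α, x.2 β = p β) ∧
  (∀ δ < γ, (f δ).1 ≤ x.1 ∧ ∀ β < (f δ).1, x.2 β = (f δ).2 β) ∧
  (∀ η : Ordinal → Bool, (∀ β < x.1, η β = x.2 β) → η ∈ F' γ ∧ swapq α q η ∈ F' γ)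

lemma good_congr {F' : Ordinal.{u} → Set (Ordinal.{u} → Bool)} {γ : Ordinal.{u}}
    {f g : Ordinal.{u} → Ordinal.{u} × (Ordinal.{u} → Bool)} (h : ∀ δ < γ, f δ = g δ)
    {x : Ordinal.{u} × (Ordinal.{u} → Bool)} :
    Good κ α p q F' γ f x ↔ Good κ α p q F' γ g x := by
  unfold Good
  constructor <;> rintro ⟨h1, h2, h3, h4, h5⟩ <;> refine ⟨h1, h2, h3, fun δ hδ => ?_, h5⟩
  · rw [← h δ hδ]; exact h4 δ hδ
  · rw [h δ hδ]; exact h4 δ hδ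

/-- Coherence of a chain of good conditions. -/
lemma coh {F' : Ordinal.{u} → Set (Ordinal.{u} → Bool)} {c : Ordinal.{u}}
    {f : Ordinal.{u} → Ordinal.{u} × (Ordinal.{u} → Bool)}
    (ih : ∀ δ < c, Good κ α p q F' δ f (f δ)) {δ₁ δ₂ : Ordinal} (h1 : δ₁ < c) (h2 : δ₂ < c)
    {β : Ordinal} (hβ1 : β < (f δ₁).1) (hβ2 : β < (f δ₂).1) :
    (f δ₁).2 β = (f δ₂).2 β := by
  rcases lt_trichotomy δ₁ δ₂ with h | h | h
  · exact (((ih δ₂ h2).2.2.2.1 δ₁ h).2 β hβ1).symm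
  · rw [h]
  · exact ((ih δ₁ h1).2.2.2.1 δ₂ h).2 β hβ2

/-- Existence of a good condition at every stage `γ < κ.ord`, given that all earlier
stages are good. -/
lemma exists_good (hreg : κ.IsRegular) (hα : α < κ.ord)
    {F' : Ordinal.{u} → Set (Ordinal.{u} → Bool)}
    (hF' : ∀ γ, @IsOpen _ (gbTop κ Bool) (F' γ) ∧ @Dense _ (gbTop κ Bool) (F' γ))
    {γ : Ordinal} (hγ : γ < κ.ord) {f : Ordinal → Ordinal × (Ordinal → Bool)}
    (ih : ∀ δ < γ, Good κ α p q F' δ f (f δ)) :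
    ∃ x, Good κ α p q F' γ f x := by
  set b0 : Ordinal := max α (Ordinal.bsup γ (fun δ _ => (f δ).1)) with hb0def
  have hαb0 : α ≤ b0 := le_max_left _ _
  have hb0κ : b0 < κ.ord :=
    max_lt hα (Cardinal.bsup_lt_ord_of_isRegular hreg (Cardinal.lt_ord.mp hγ)
      fun δ hδ => (ih δ hδ).2.1)
  have hb0ge : ∀ δ < γ, (f δ).1 ≤ b0 := fun δ hδ =>
    (Ordinal.le_bsup _ δ hδ).trans (le_max_right _ _)
  set s0 : Ordinal → Bool := fun β =>
    if h : ∃ δ, δ < γ ∧ β < (f δ).1 then (f h.choose).2 β else p β with hs0def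
  have hs0chain : ∀ δ < γ, ∀ β < (f δ).1, s0 β = (f δ).2 β := by
    intro δ hδ β hβ
    have hex : ∃ δ', δ' < γ ∧ β < (f δ').1 := ⟨δ, hδ, hβ⟩
    rw [hs0def]
    simp only [dif_pos hex]
    exact coh κ α p q ih hex.choose_spec.1 hδ hex.choose_spec.2 hβ
  have hs0p : ∀ β < α, s0 β = p β := by
    intro β hβ
    rw [hs0def]
    dsimp only
    split_ifs with h
    · exact (ih h.choose h.choose_spec.1).2.2.1 β hβ
    · rfl
  obtain ⟨b1, hb01, hb1κ, s1, hs1agree, hs1in⟩ :=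
    dense_extend κ (hF' γ).1 (hF' γ).2 hb0κ s0
  obtain ⟨b2, hb12, hb2κ, t, htagree, htin⟩ :=
    dense_extend κ (hF' γ).1 (hF' γ).2 hb1κ (swapq α q s1)
  refine ⟨(b2, fun β => if β < α then s1 β else t β),
    hαb0.trans (hb01.trans hb12), hb2κ, ?_, ?_, ?_⟩
  · -- starts with p
    intro β hβ
    have : s1 β = s0 β := hs1agree β (hβ.trans_le hαb0)
    simp only [if_pos hβ]
    rw [this]
    exact hs0p β hβ
  · -- extends previous conditions
    intro δ hδ
    refine ⟨(hb0ge δ hδ).trans (hb01.trans hb12), fun β hβ => ?_⟩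
    have hβ0 : β < b0 := hβ.trans_le (hb0ge δ hδ)
    by_cases hβα : β < α
    · simp only [if_pos hβα]
      rw [hs1agree β hβ0]
      exact hs0chain δ hδ β hβ
    · simp only [if_neg hβα]
      have h1 : t β = swapq α q s1 β := htagree β (hβ0.trans_le hb01)
      rw [h1]
      unfold swapq
      simp only [if_neg hβα]
      rw [hs1agree β hβ0]
      exact hs0chain δ hδ β hβ
  · -- forcing
    intro η hη
    constructor
    · apply hs1in
      intro β hβ
      have hβ2 : β < b2 := hβ.trans_le hb12
      rw [hη β hβ2]
      by_cases hβα : β < α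
      · simp only [if_pos hβα]
      · simp only [if_neg hβα]
        have := htagree β hβ
        rw [this]
        unfold swapq
        simp only [if_neg hβα]
    · apply htin
      intro β hβ
      by_cases hβα : β < α
      · have h1 : t β = swapq α q s1 β :=
          htagree β (hβα.trans_le (hαb0.trans hb01))
        unfold swapq
        rw [h1]
        unfold swapq
        simp only [if_pos hβα]
      · unfold swapq
        simp only [if_neg hβα]
        rw [hη β hβ]
        simp only [if_neg hβα]

/-- The transfinite recursion: at each stage pick a good condition. -/
def Pfun (F' : Ordinal.{u} → Set (Ordinal.{u} → Bool)) (γ : Ordinal.{u}) : Ordinal.{u} × (Ordinal.{u} → Bool) :=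
  if h : ∃ x, Good κ α p q F' γ
      (fun δ => if hδ : δ < γ then Pfun F' δ else (0, p)) x
  then h.choose else (0, p)
termination_by γ
decreasing_by all_goals exact hδ

lemma good_P (hreg : κ.IsRegular) (hα : α < κ.ord)
    {F' : Ordinal.{u} → Set (Ordinal.{u} → Bool)}
    (hF' : ∀ γ, @IsOpen _ (gbTop κ Bool) (F' γ) ∧ @Dense _ (gbTop κ Bool) (F' γ)) :
    ∀ γ < κ.ord, Good κ α p q F' γ (Pfun κ α p q F') (Pfun κ α p q F' γ) := by
  intro γ
  induction γ using Ordinal.induction with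
  | h γ IH =>
    intro hγ
    have hfg : Good κ α p q F' γ
        (fun δ => if hδ : δ < γ then Pfun κ α p q F' δ else (0, p)) =
        Good κ α p q F' γ (Pfun κ α p q F') := by
      funext x
      exact propext (good_congr κ α p q
        (f := fun δ => if hδ : δ < γ then Pfun κ α p q F' δ else (0, p))
        (g := Pfun κ α p q F') (fun δ hδ => dif_pos hδ))
    have hex : ∃ x, Good κ α p q F' γ (Pfun κ α p q F') x :=
      exists_good κ α p q hreg hα hF' hγ fun δ hδ => IH δ hδ (hδ.trans hγ)
    rw [Pfun, hfg, dif_pos hex]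
    exact hex.choose_spec

end CCT

/-- for a co-meager `D ⊆ 2^κ`, any `α < κ` and any `p, q : α → 2`, there is
`η : [α, κ) → 2` with both concatenations `p⌢η` and `q⌢η` in `D`. -/
theorem comeager_common_tail (κ : Cardinal) (hreg : κ.IsRegular) (hunc : ℵ₀ < κ)
    (hpow : κ ^< κ = κ) (D : Set (Ordinal → Bool)) (hD : Comeager κ D)
    (α : Ordinal) (hα : α < κ.ord) (p q : Ordinal → Bool) :
    ∃ η : Ordinal → Bool,
      (fun β => if β < α then p β else η β) ∈ D ∧
      (fun β => if β < α then q β else η β) ∈ D := by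
  classical
  obtain ⟨ι, F, hmk, hF, hsub⟩ := hD
  have hmk' : #ι ≤ #(κ.ord.ToType) := by
    rw [Cardinal.mk_ord_toType]; exact hmk
  obtain ⟨e⟩ := (Cardinal.le_def ι κ.ord.ToType).mp hmk'
  set fo : ι → Ordinal := fun i => ((Ordinal.ToType.mk (o := κ.ord)).symm (e i)).val with hfodef
  have hfolt : ∀ i, fo i < κ.ord := fun i => ((Ordinal.ToType.mk (o := κ.ord)).symm (e i)).2
  have hfoinj : Function.Injective fo := fun i j hij =>
    e.injective ((Ordinal.ToType.mk (o := κ.ord)).symm.injective (Subtype.ext hij))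
  set F' : Ordinal → Set (Ordinal → Bool) := fun γ =>
    if h : ∃ i, fo i = γ then F h.choose else univ with hF'def
  have hF'od : ∀ γ, @IsOpen _ (gbTop κ Bool) (F' γ) ∧ @Dense _ (gbTop κ Bool) (F' γ) := by
    intro γ
    rw [hF'def]
    dsimp only
    split_ifs with h
    · exact hF _
    · exact ⟨@isOpen_univ _ (gbTop κ Bool), @dense_univ _ (gbTop κ Bool)⟩
  have hF'sub : ∀ i, F' (fo i) ⊆ F i := by
    intro i
    have hex : ∃ j, fo j = fo i := ⟨i, rfl⟩
    have hch : hex.choose = i := hfoinj hex.choose_spec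
    rw [hF'def]
    dsimp only
    rw [dif_pos hex, hch]
  have key := CCT.good_P κ α p q hreg hα hF'od
  set P := CCT.Pfun κ α p q F' with hPdef
  set ξ : Ordinal → Bool := fun β =>
    if h : ∃ γ, γ < κ.ord ∧ β < (P γ).1 then (P h.choose).2 β else p β with hξdef
  have hξagree : ∀ γ < κ.ord, ∀ β < (P γ).1, ξ β = (P γ).2 β := by
    intro γ hγ β hβ
    have hex : ∃ γ', γ' < κ.ord ∧ β < (P γ').1 := ⟨γ, hγ, hβ⟩
    rw [hξdef]
    simp only [dif_pos hex]
    exact CCT.coh κ α p q key hex.choose_spec.1 hγ hex.choose_spec.2 hβ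
  have hξp : ∀ β < α, ξ β = p β := by
    intro β hβ
    rw [hξdef]
    dsimp only
    split_ifs with h
    · exact (key h.choose h.choose_spec.1).2.2.1 β hβ
    · rfl
  have hmem : ∀ i, ξ ∈ F i ∧ CCT.swapq α q ξ ∈ F i := by
    intro i
    have h := (key (fo i) (hfolt i)).2.2.2.2 ξ (hξagree (fo i) (hfolt i))
    exact ⟨hF'sub i h.1, hF'sub i h.2⟩
  refine ⟨ξ, ?_, ?_⟩
  · have hfun : (fun β => if β < α then p β else ξ β) = ξ := by
      funext β
      split_ifs with h
      · exact (hξp β h).symm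
      · rfl
    rw [hfun]
    exact hsub (mem_iInter.mpr fun i => (hmem i).1)
  · have hfun : (fun β => if β < α then q β else ξ β) = CCT.swapq α q ξ := rfl
    rw [hfun]
    exact hsub (mem_iInter.mpr fun i => (hmem i).2)

end
end

section
/- Let κ be an uncountable regular cardinal with κ^{<κ} = κ. Let D be a co-meager subset of 2^κ and let p, q : α → 2 for some α < κ. Then there exists η : [α, κ) → 2 such that p⌢η ∈ D and q⌢(1-η) ∈ D, where (1-η)(β) = 1 - η(β) for all β ∈ [α, κ). -/
open Cardinal Set
open scoped Classical

noncomputable section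

/-! ### Auxiliary development -/

/-- Basic cylinder: all functions agreeing with `x` below `γ`. -/
def Cyl (x : Ordinal.{0} → Bool) (γ : Ordinal.{0}) : Set (Ordinal.{0} → Bool) :=
  {η | ∀ β < γ, η β = x β}

lemma cyl_isOpen (κ : Cardinal.{0}) {γ : Ordinal.{0}} (hγ : γ < κ.ord) (x : Ordinal.{0} → Bool) :
    @IsOpen _ (gbTop κ Bool) (Cyl x γ) :=
  TopologicalSpace.GenerateOpen.basic _ ⟨γ, hγ, x, rfl⟩

lemma exists_cyl_subset {κ : Cardinal.{0}} (h0 : 0 < κ.ord) {U : Set (Ordinal.{0} → Bool)}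
    (hU : @IsOpen _ (gbTop κ Bool) U) :
    ∀ x ∈ U, ∃ γ < κ.ord, Cyl x γ ⊆ U := by
  have hU' : TopologicalSpace.GenerateOpen
      {s | ∃ α < κ.ord, ∃ p : Ordinal.{0} → Bool, s = {η | ∀ β < α, η β = p β}} U := hU
  clear hU
  induction hU' with
  | basic s hs =>
    obtain ⟨β, hβ, r, rfl⟩ := hs
    intro x hx
    refine ⟨β, hβ, fun y hy δ hδ => ?_⟩
    rw [hy δ hδ]
    exact hx δ hδ
  | univ => exact fun x _ => ⟨0, h0, fun y _ => trivial⟩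
  | inter s t _ _ ihs iht =>
    intro x hx
    obtain ⟨γ₁, hγ₁, h1⟩ := ihs x hx.1
    obtain ⟨γ₂, hγ₂, h2⟩ := iht x hx.2
    refine ⟨max γ₁ γ₂, max_lt hγ₁ hγ₂, fun y hy => ?_⟩
    exact ⟨h1 (fun β hβ => hy β (lt_of_lt_of_le hβ (le_max_left _ _))),
      h2 (fun β hβ => hy β (lt_of_lt_of_le hβ (le_max_right _ _)))⟩
  | sUnion S _ ih =>
    intro x hx
    obtain ⟨t, htS, hxt⟩ := hx
    obtain ⟨γ, hγ, hsub⟩ := ih t htS x hxt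
    exact ⟨γ, hγ, fun y hy => ⟨t, htS, hsub hy⟩⟩

lemma dense_inter_cyl {κ : Cardinal.{0}} {U : Set (Ordinal.{0} → Bool)}
    (hd : @Dense _ (gbTop κ Bool) U) {γ : Ordinal.{0}} (hγ : γ < κ.ord)
    (x : Ordinal.{0} → Bool) :
    ∃ y ∈ U, ∀ β < γ, y β = x β := by
  obtain ⟨y, hy1, hy2⟩ := (@dense_iff_inter_open _ (gbTop κ Bool) U).1 hd (Cyl x γ)
    (cyl_isOpen κ hγ x) ⟨x, fun β _ => rfl⟩
  exact ⟨y, hy2, hy1⟩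

/-- The property of a "next condition" `z = (point, length)` at stage `γ`, given all
previously chosen conditions `prev`. -/
def PStep (κ : Cardinal.{0}) (G : Ordinal.{0} → Set (Ordinal.{0} → Bool))
    (p : Ordinal.{0} → Bool) (α γ : Ordinal.{0})
    (prev : ∀ δ, δ < γ → (Ordinal.{0} → Bool) × Ordinal.{0})
    (z : (Ordinal.{0} → Bool) × Ordinal.{0}) : Prop :=
  z.2 < κ.ord ∧ α ≤ z.2 ∧ (∀ ε < α, z.1 ε = p ε) ∧
  (∀ δ (h : δ < γ), (prev δ h).2 ≤ z.2 ∧ ∀ ε < (prev δ h).2, z.1 ε = (prev δ h).1 ε) ∧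
  (∀ w : Ordinal.{0} → Bool, (∀ ε < z.2, w ε = z.1 ε) → w ∈ G γ)

/-- Transfinite recursion choosing conditions. -/
noncomputable def approx (κ : Cardinal.{0}) (G : Ordinal.{0} → Set (Ordinal.{0} → Bool))
    (p : Ordinal.{0} → Bool) (α : Ordinal.{0}) (γ : Ordinal.{0}) :
    (Ordinal.{0} → Bool) × Ordinal.{0} :=
  if h : ∃ z, PStep κ G p α γ (fun δ hδ => approx κ G p α δ) z then h.choose else (p, α)
termination_by γ
decreasing_by all_goals exact hδ

lemma approx_eq (κ : Cardinal.{0}) (G : Ordinal.{0} → Set (Ordinal.{0} → Bool))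
    (p : Ordinal.{0} → Bool) (α : Ordinal.{0}) (γ : Ordinal.{0}) :
    approx κ G p α γ =
      if h : ∃ z, PStep κ G p α γ (fun δ hδ => approx κ G p α δ) z then h.choose
      else (p, α) := by
  rw [approx]

lemma approx_spec {κ : Cardinal.{0}} (hreg : κ.IsRegular)
    {G : Ordinal.{0} → Set (Ordinal.{0} → Bool)} {p : Ordinal.{0} → Bool} {α : Ordinal.{0}}
    (hα : α < κ.ord)
    (hG : ∀ γ < κ.ord, @IsOpen _ (gbTop κ Bool) (G γ) ∧ @Dense _ (gbTop κ Bool) (G γ)) :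
    ∀ γ < κ.ord, PStep κ G p α γ (fun δ _ => approx κ G p α δ) (approx κ G p α γ) := by
  intro γ
  induction γ using Ordinal.induction with
  | h γ IH =>
  intro hγ
  have IH' : ∀ δ (h : δ < γ),
      PStep κ G p α δ (fun ε _ => approx κ G p α ε) (approx κ G p α δ) :=
    fun δ h => IH δ h (h.trans hγ)
  have coh : ∀ δ₁, δ₁ < γ → ∀ δ₂, δ₂ < γ → δ₁ ≤ δ₂ →
      (approx κ G p α δ₁).2 ≤ (approx κ G p α δ₂).2 ∧
      ∀ ε < (approx κ G p α δ₁).2, (approx κ G p α δ₂).1 ε = (approx κ G p α δ₁).1 ε := by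
    intro δ₁ h1 δ₂ h2 hle
    rcases eq_or_lt_of_le hle with rfl | hlt
    · exact ⟨le_rfl, fun ε _ => rfl⟩
    · exact (IH' δ₂ h2).2.2.2.1 δ₁ hlt
  set B := max α (Ordinal.bsup γ (fun δ _ => (approx κ G p α δ).2)) with hBdef
  have hB : B < κ.ord := by
    refine max_lt hα (Cardinal.bsup_lt_ord_of_isRegular hreg (Cardinal.lt_ord.1 hγ) ?_)
    exact fun δ h => (IH' δ h).1
  have hαB : α ≤ B := le_max_left _ _
  have hfB : ∀ δ, δ < γ → (approx κ G p α δ).2 ≤ B :=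
    fun δ h => le_trans (Ordinal.le_bsup _ δ h) (le_max_right _ _)
  have huex : ∀ ε : Ordinal.{0},
      (∃ δ, ∃ _ : δ < γ, ε < (approx κ G p α δ).2) ∨
      ¬ (∃ δ, ∃ _ : δ < γ, ε < (approx κ G p α δ).2) := fun ε => Classical.em _
  set u : Ordinal.{0} → Bool :=
    fun ε => if h : ∃ δ, ∃ _ : δ < γ, ε < (approx κ G p α δ).2
      then (approx κ G p α h.choose).1 ε else p ε with hudef
  have hu : ∀ δ, δ < γ → ∀ ε < (approx κ G p α δ).2, u ε = (approx κ G p α δ).1 ε := by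
    intro δ h ε hε
    have hex : ∃ δ', ∃ _ : δ' < γ, ε < (approx κ G p α δ').2 := ⟨δ, h, hε⟩
    rw [hudef]
    simp only [dif_pos hex]
    obtain ⟨h', hε'⟩ := hex.choose_spec
    rcases le_total δ hex.choose with hle | hle
    · exact (coh δ h _ h' hle).2 ε hε
    · exact ((coh _ h' δ h hle).2 ε hε').symm
  have hup : ∀ ε < α, u ε = p ε := by
    intro ε hε
    rw [hudef]
    by_cases hex : ∃ δ', ∃ _ : δ' < γ, ε < (approx κ G p α δ').2
    · simp only [dif_pos hex]
      obtain ⟨h', _⟩ := hex.choose_spec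
      exact (IH' _ h').2.2.1 ε hε
    · simp only [dif_neg hex]
  obtain ⟨y, hyG, hyu⟩ := dense_inter_cyl (hG γ hγ).2 hB u
  obtain ⟨β', hβ', hsub⟩ := exists_cyl_subset
    (lt_of_le_of_lt (show (0 : Ordinal.{0}) ≤ α from zero_le) hα) (hG γ hγ).1 y hyG
  have hex : ∃ z, PStep κ G p α γ (fun δ _ => approx κ G p α δ) z := by
    refine ⟨(y, max B β'), max_lt hB hβ', le_trans hαB (le_max_left _ _),
      fun ε hε => ?_, fun δ h => ⟨le_trans (hfB δ h) (le_max_left _ _), fun ε hε => ?_⟩,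
      fun w hw => ?_⟩
    · show y ε = p ε
      rw [hyu ε (lt_of_lt_of_le hε hαB)]
      exact hup ε hε
    · show y ε = (approx κ G p α δ).1 ε
      rw [hyu ε (lt_of_lt_of_le hε (hfB δ h))]
      exact hu δ h ε hε
    · apply hsub
      intro ε hε
      exact hw ε (lt_of_lt_of_le hε (le_max_right _ _))
  have heq : approx κ G p α γ = hex.choose := (approx_eq κ G p α γ).trans (dif_pos hex)
  rw [heq]
  exact hex.choose_spec

/-- The generic point: through all the dense open sets, extending `p` below `α`. -/
lemma exists_generic {κ : Cardinal.{0}} (hreg : κ.IsRegular)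
    {G : Ordinal.{0} → Set (Ordinal.{0} → Bool)} {p : Ordinal.{0} → Bool} {α : Ordinal.{0}}
    (hα : α < κ.ord)
    (hG : ∀ γ < κ.ord, @IsOpen _ (gbTop κ Bool) (G γ) ∧ @Dense _ (gbTop κ Bool) (G γ)) :
    ∃ y : Ordinal.{0} → Bool, (∀ ε < α, y ε = p ε) ∧ ∀ γ < κ.ord, y ∈ G γ := by
  have hspec : ∀ γ < κ.ord,
      PStep κ G p α γ (fun δ _ => approx κ G p α δ) (approx κ G p α γ) :=
    approx_spec hreg hα hG
  have coh : ∀ δ₁, δ₁ < κ.ord → ∀ δ₂, δ₂ < κ.ord → δ₁ ≤ δ₂ →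
      ∀ ε < (approx κ G p α δ₁).2, (approx κ G p α δ₂).1 ε = (approx κ G p α δ₁).1 ε := by
    intro δ₁ h1 δ₂ h2 hle ε hε
    rcases eq_or_lt_of_le hle with rfl | hlt
    · rfl
    · exact ((hspec δ₂ h2).2.2.2.1 δ₁ hlt).2 ε hε
  set y : Ordinal.{0} → Bool :=
    fun ε => if h : ∃ δ, ∃ _ : δ < κ.ord, ε < (approx κ G p α δ).2
      then (approx κ G p α h.choose).1 ε else p ε with hydef
  have hy : ∀ δ, δ < κ.ord → ∀ ε < (approx κ G p α δ).2, y ε = (approx κ G p α δ).1 ε := by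
    intro δ h ε hε
    have hex : ∃ δ', ∃ _ : δ' < κ.ord, ε < (approx κ G p α δ').2 := ⟨δ, h, hε⟩
    rw [hydef]
    simp only [dif_pos hex]
    obtain ⟨h', hε'⟩ := hex.choose_spec
    rcases le_total δ hex.choose with hle | hle
    · exact coh δ h _ h' hle ε hε
    · exact (coh _ h' δ h hle ε hε').symm
  refine ⟨y, ?_, ?_⟩
  · intro ε hε
    rw [hydef]
    by_cases hex : ∃ δ', ∃ _ : δ' < κ.ord, ε < (approx κ G p α δ').2
    · simp only [dif_pos hex]
      obtain ⟨h', _⟩ := hex.choose_spec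
      exact (hspec _ h').2.2.1 ε hε
    · simp only [dif_neg hex]
  · intro γ hγ
    exact (hspec γ hγ).2.2.2.2 y (hy γ hγ)

/-- The "flip the tail above `α`, replace the head by `q`" map. -/
def flipMap (q : Ordinal.{0} → Bool) (α : Ordinal.{0}) (x : Ordinal.{0} → Bool) :
    Ordinal.{0} → Bool :=
  fun β => if β < α then q β else !(x β)

lemma flipMap_preimage_open {κ : Cardinal.{0}} {q : Ordinal.{0} → Bool} {α : Ordinal.{0}}
    (hα : α < κ.ord) {U : Set (Ordinal.{0} → Bool)} (hU : @IsOpen _ (gbTop κ Bool) U) :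
    @IsOpen _ (gbTop κ Bool) (flipMap q α ⁻¹' U) := by
  have h0 : (0 : Ordinal.{0}) < κ.ord := lt_of_le_of_lt (show (0 : Ordinal.{0}) ≤ α from zero_le) hα
  refine (@isOpen_iff_forall_mem_open _ (gbTop κ Bool) (flipMap q α ⁻¹' U)).2 ?_
  intro x hx
  obtain ⟨γ, hγ, hsub⟩ := exists_cyl_subset h0 hU (flipMap q α x) hx
  refine ⟨Cyl x (max γ α), ?_, cyl_isOpen κ (max_lt hγ hα) x, fun β _ => rfl⟩
  intro w hw
  apply hsub
  intro β hβ
  by_cases hβα : β < α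
  · simp [flipMap, hβα]
  · simp only [flipMap, if_neg hβα]
    rw [hw β (lt_of_lt_of_le hβ (le_max_left _ _))]

lemma flipMap_preimage_dense {κ : Cardinal.{0}} {q : Ordinal.{0} → Bool} {α : Ordinal.{0}}
    (hα : α < κ.ord) {U : Set (Ordinal.{0} → Bool)} (hU : @Dense _ (gbTop κ Bool) U) :
    @Dense _ (gbTop κ Bool) (flipMap q α ⁻¹' U) := by
  have h0 : (0 : Ordinal.{0}) < κ.ord := lt_of_le_of_lt (show (0 : Ordinal.{0}) ≤ α from zero_le) hα
  refine (@dense_iff_inter_open _ (gbTop κ Bool) (flipMap q α ⁻¹' U)).2 ?_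
  rintro V hV ⟨x, hx⟩
  obtain ⟨γ₀, hγ₀, hsub⟩ := exists_cyl_subset h0 hV x hx
  have hγ : max γ₀ α < κ.ord := max_lt hγ₀ hα
  obtain ⟨z, hzU, hz⟩ := dense_inter_cyl hU hγ (flipMap q α x)
  set w : Ordinal.{0} → Bool := fun β => if β < max γ₀ α then x β else !(z β) with hwdef
  have hwV : w ∈ V := by
    apply hsub
    intro β hβ
    rw [hwdef]
    simp only [if_pos (lt_of_lt_of_le hβ (le_max_left γ₀ α))]
  have hΦw : flipMap q α w = z := by
    funext β
    by_cases hβα : β < α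
    · have hβγ : β < max γ₀ α := lt_of_lt_of_le hβα (le_max_right _ _)
      rw [flipMap]
      simp only [if_pos hβα]
      rw [hz β hβγ, flipMap]
      simp only [if_pos hβα]
    · by_cases hβγ : β < max γ₀ α
      · rw [flipMap]
        simp only [if_neg hβα]
        rw [hwdef]
        simp only [if_pos hβγ]
        rw [hz β hβγ, flipMap]
        simp only [if_neg hβα, Bool.not_not]
      · rw [flipMap]
        simp only [if_neg hβα]
        rw [hwdef]
        simp only [if_neg hβγ, Bool.not_not]
  refine ⟨w, hwV, ?_⟩
  show flipMap q α w ∈ U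
  rw [hΦw]
  exact hzU

/-- for a co-meager `D ⊆ 2^κ`, any `α < κ` and any `p, q : α → 2`, there is
`η : [α, κ) → 2` with `p⌢η ∈ D` and `q⌢(1-η) ∈ D`. -/
theorem comeager_flipped_tail (κ : Cardinal) (hreg : κ.IsRegular) (hunc : ℵ₀ < κ)
    (hpow : κ ^< κ = κ) (D : Set (Ordinal → Bool)) (hD : Comeager κ D)
    (α : Ordinal) (hα : α < κ.ord) (p q : Ordinal → Bool) :
    ∃ η : Ordinal → Bool,
      (fun β => if β < α then p β else η β) ∈ D ∧
      (fun β => if β < α then q β else !(η β)) ∈ D := by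
  obtain ⟨ι, F, hι, hF, hFD⟩ := hD
  by_cases hι0 : IsEmpty ι
  · refine ⟨fun _ => true, hFD ?_, hFD ?_⟩ <;>
    · rw [Set.mem_iInter]
      exact fun i => hι0.elim i
  · rw [not_isEmpty_iff] at hι0
    have hcard : #(ι ⊕ ι) ≤ #κ.ord.ToType := by
      rw [Cardinal.mk_toType, Cardinal.card_ord, Cardinal.mk_sum]
      simp only [Cardinal.lift_id]
      exact Cardinal.add_le_of_le hunc.le hι hι
    obtain ⟨e⟩ : Nonempty (ι ⊕ ι ↪ κ.ord.ToType) := (Cardinal.le_def _ _).1 hcard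
    have hs : Function.Surjective (Function.invFun e) :=
      Function.invFun_surjective e.injective
    set H : ι ⊕ ι → Set (Ordinal → Bool) :=
      Sum.elim F (fun i => flipMap q α ⁻¹' (F i)) with hHdef
    have hH : ∀ j, @IsOpen _ (gbTop κ Bool) (H j) ∧ @Dense _ (gbTop κ Bool) (H j) := by
      rintro (i | i)
      · exact hF i
      · exact ⟨flipMap_preimage_open hα (hF i).1, flipMap_preimage_dense hα (hF i).2⟩
    have hGprop : ∀ γ < κ.ord,
        @IsOpen _ (gbTop κ Bool) (if h : γ < κ.ord then
          H (Function.invFun e (Ordinal.ToType.mk (o := κ.ord) ⟨γ, h⟩)) else Set.univ) ∧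
        @Dense _ (gbTop κ Bool) (if h : γ < κ.ord then
          H (Function.invFun e (Ordinal.ToType.mk (o := κ.ord) ⟨γ, h⟩)) else Set.univ) := by
      intro γ hγ
      rw [dif_pos hγ]
      exact hH _
    obtain ⟨y, hyp, hyG⟩ := exists_generic hreg hα
      (G := fun γ => if h : γ < κ.ord then
        H (Function.invFun e (Ordinal.ToType.mk (o := κ.ord) ⟨γ, h⟩)) else Set.univ)
      (p := p) hGprop
    have hyH : ∀ j, y ∈ H j := by
      intro j
      obtain ⟨t, ht⟩ := hs j
      have h2 := hyG ((Ordinal.ToType.mk (o := κ.ord)).symm t).1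
        ((Ordinal.ToType.mk (o := κ.ord)).symm t).2
      simp only [dif_pos (show ((Ordinal.ToType.mk (o := κ.ord)).symm t : Ordinal) < κ.ord from
        ((Ordinal.ToType.mk (o := κ.ord)).symm t).2), Subtype.coe_eta] at h2
      rw [(Ordinal.ToType.mk (o := κ.ord)).apply_symm_apply, ht] at h2
      exact h2
    have hy1 : (fun β => if β < α then p β else y β) = y := by
      funext β
      by_cases h : β < α
      · rw [if_pos h, hyp β h]
      · rw [if_neg h]
    refine ⟨y, ?_, ?_⟩
    · rw [hy1]
      exact hFD (Set.mem_iInter.2 fun i => hyH (Sum.inl i))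
    · show flipMap q α y ∈ D
      exact hFD (Set.mem_iInter.2 fun i => hyH (Sum.inr i))
end
end

section
/- Let κ be an uncountable regular cardinal with κ^{<κ} = κ. Then there is no Borel reduction from E_0 to the identity relation id on 2^κ; that is, there is no Borel function f : 2^κ → 2^κ such that for all η, ξ ∈ 2^κ, {α : η(α) ≠ ξ(α)} is bounded if and only if f(η) = f(ξ). -/
open Cardinal Set
open scoped Classical

noncomputable section

/-- Borel sets of a topology `t`: the smallest collection containing the open sets and
closed under complements and unions and intersections of length `≤ κ`. -/
inductive GBorel {X : Type*} (t : TopologicalSpace X) (κ : Cardinal) : Set X → Prop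
  | isOpen (s : Set X) : @IsOpen _ t s → GBorel t κ s
  | compl (s : Set X) : GBorel t κ s → GBorel t κ sᶜ
  | iUnion (ι : Type) (f : ι → Set X) (hι : Cardinal.mk ι ≤ κ)
      (h : ∀ i, GBorel t κ (f i)) : GBorel t κ (⋃ i, f i)
  | iInter (ι : Type) (f : ι → Set X) (hι : Cardinal.mk ι ≤ κ)
      (h : ∀ i, GBorel t κ (f i)) : GBorel t κ (⋂ i, f i)

/-- `E_0`: equality modulo bounded sets (below `κ`). -/
def E0 (κ : Cardinal) (η ξ : Ordinal → Bool) : Prop :=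
  ∃ α < κ.ord, ∀ β, α ≤ β → β < κ.ord → η β = ξ β

/-- `E_S^*`: for every `α ∈ S` the symmetric difference `η △ ξ` is eventually constant
below `α`. -/
def EStar (S : Set Ordinal) (η ξ : Ordinal → Bool) : Prop :=
  ∀ α ∈ S, ∃ β < α, ∃ b : Bool, ∀ γ, β < γ → γ < α → xor (η γ) (ξ γ) = b

/-- A Borel function `2^κ → 2^κ`: preimages of open sets are Borel. -/
def GBorelFun (κ : Cardinal) (f : (Ordinal → Bool) → (Ordinal → Bool)) : Prop :=
  ∀ s, @IsOpen _ (gbTop κ Bool) s → GBorel (gbTop κ Bool) κ (f ⁻¹' s)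

namespace E0Aux

variable (κ : Cardinal.{0})

def Bs (α : Ordinal.{0}) (p : Ordinal.{0} → Bool) : Set (Ordinal.{0} → Bool) := {η | ∀ β < α, η β = p β}

theorem self_mem_Bs (α : Ordinal.{0}) (p : Ordinal.{0} → Bool) : p ∈ Bs α p := fun _ _ => rfl

theorem Bs_eq_of_mem {α : Ordinal.{0}} {p x : Ordinal.{0} → Bool} (hx : x ∈ Bs α p) :
    Bs α x = Bs α p := by
  ext y
  constructor <;> intro hy β hβ
  · rw [hy β hβ, hx β hβ]
  · rw [hy β hβ, ← hx β hβ]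

theorem Bs_anti {α α' : Ordinal.{0}} (h : α ≤ α') (p : Ordinal.{0} → Bool) : Bs α' p ⊆ Bs α p :=
  fun _ hy β hβ => hy β (lt_of_lt_of_le hβ h)

theorem isOpen_iff (h0 : 0 < κ.ord) {s : Set (Ordinal.{0} → Bool)} :
    @IsOpen _ (gbTop κ Bool) s ↔ ∀ x ∈ s, ∃ α < κ.ord, Bs α x ⊆ s := by
  constructor
  · intro hs
    have hs' : TopologicalSpace.GenerateOpen
        {s | ∃ α < κ.ord, ∃ p : Ordinal.{0} → Bool, s = {η | ∀ β < α, η β = p β}} s := hs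
    clear hs
    induction hs' with
    | basic u hu =>
      rcases hu with ⟨α, hα, p, rfl⟩
      intro x hx
      exact ⟨α, hα, by rw [show Bs α x = Bs α p from Bs_eq_of_mem hx]; exact fun y hy => hy⟩
    | univ => exact fun x _ => ⟨0, h0, fun y _ => trivial⟩
    | inter u v hu hv ihu ihv =>
      intro x hx
      obtain ⟨α, hα, hsub⟩ := ihu x hx.1
      obtain ⟨β, hβ, hsub'⟩ := ihv x hx.2
      exact ⟨max α β, max_lt hα hβ,
        fun y hy => ⟨hsub (Bs_anti (le_max_left _ _) x hy), hsub' (Bs_anti (le_max_right _ _) x hy)⟩⟩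
    | sUnion S _ ih =>
      intro x hx
      rcases hx with ⟨u, hu, hxu⟩
      obtain ⟨α, hα, hsub⟩ := ih u hu x hxu
      exact ⟨α, hα, hsub.trans (subset_sUnion_of_mem hu)⟩
  · intro h
    have hs : s = ⋃₀ {u | u ⊆ s ∧ ∃ α < κ.ord, ∃ p, u = Bs α p} := by
      apply Subset.antisymm
      · intro x hx
        obtain ⟨α, hα, hsub⟩ := h x hx
        exact ⟨Bs α x, ⟨hsub, α, hα, x, rfl⟩, self_mem_Bs α x⟩
      · rintro x ⟨u, ⟨hus, _⟩, hxu⟩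
        exact hus hxu
    rw [hs]
    exact @isOpen_sUnion _ (gbTop κ Bool) _
      (fun u hu => TopologicalSpace.GenerateOpen.basic u hu.2)


def Ext (α : Ordinal.{0}) (p : Ordinal.{0} → Bool) (β : Ordinal.{0}) (q : Ordinal.{0} → Bool) : Prop :=
  α ≤ β ∧ ∀ γ < α, q γ = p γ

theorem Bs_subset_of_ext {α β : Ordinal.{0}} {p q : Ordinal.{0} → Bool} (h : Ext α p β q) :
    Bs β q ⊆ Bs α p := fun y hy γ hγ =>
  (hy γ (lt_of_lt_of_le hγ h.1)).trans (h.2 γ hγ)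

def ND (s : Set (Ordinal.{0} → Bool)) : Prop :=
  ∀ α < κ.ord, ∀ p, ∃ β < κ.ord, ∃ q, Ext α p β q ∧ Bs β q ∩ s = ∅

def Meager (s : Set (Ordinal.{0} → Bool)) : Prop :=
  ∃ (ι : Type) (F : ι → Set (Ordinal.{0} → Bool)), #ι ≤ κ ∧ (∀ i, ND κ (F i)) ∧ s ⊆ ⋃ i, F i

variable {κ}

theorem ND.mono {s t : Set (Ordinal.{0} → Bool)} (hst : s ⊆ t) (ht : ND κ t) : ND κ s := by
  intro α hα p
  obtain ⟨β, hβ, q, hext, hdisj⟩ := ht α hα p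
  exact ⟨β, hβ, q, hext, Set.eq_empty_of_subset_empty
    (hdisj ▸ Set.inter_subset_inter_right _ hst)⟩

theorem ND_empty : ND κ (∅ : Set (Ordinal.{0} → Bool)) := by
  intro α hα p
  exact ⟨α, hα, p, ⟨le_refl _, fun _ _ => rfl⟩, by simp⟩

theorem Meager.mono {s t : Set (Ordinal.{0} → Bool)} (hst : s ⊆ t) (ht : Meager κ t) :
    Meager κ s := by
  obtain ⟨ι, F, h1, h2, h3⟩ := ht
  exact ⟨ι, F, h1, h2, hst.trans h3⟩

theorem meager_of_ND (hκ : ℵ₀ ≤ κ) {s : Set (Ordinal.{0} → Bool)} (hs : ND κ s) : Meager κ s :=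
  ⟨PUnit, fun _ => s, by simpa using (Cardinal.one_lt_aleph0.le.trans hκ), fun _ => hs,
    by intro x hx; exact Set.mem_iUnion.mpr ⟨PUnit.unit, hx⟩⟩

theorem meager_empty (hκ : ℵ₀ ≤ κ) : Meager κ (∅ : Set (Ordinal.{0} → Bool)) :=
  meager_of_ND hκ ND_empty

theorem meager_iUnion (hκ : ℵ₀ ≤ κ) {ι : Type} (hι : #ι ≤ κ) {f : ι → Set (Ordinal.{0} → Bool)}
    (hf : ∀ i, Meager κ (f i)) : Meager κ (⋃ i, f i) := by
  choose ι' F hcard hnd hcover using hf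
  refine ⟨Σ i, ι' i, fun x => F x.1 x.2, ?_, fun x => hnd x.1 x.2, ?_⟩
  · calc #(Σ i, ι' i) = Cardinal.sum fun i => #(ι' i) := Cardinal.mk_sigma _
      _ ≤ Cardinal.sum fun _ : ι => κ := Cardinal.sum_le_sum _ _ hcard
      _ = #ι * κ := by simp
      _ ≤ κ * κ := mul_le_mul_left hι κ
      _ = κ := Cardinal.mul_eq_self hκ
  · intro x hx
    obtain ⟨i, hi⟩ := Set.mem_iUnion.mp hx
    obtain ⟨j, hj⟩ := Set.mem_iUnion.mp (hcover i hi)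
    exact Set.mem_iUnion.mpr ⟨⟨i, j⟩, hj⟩

theorem Meager.union (hκ : ℵ₀ ≤ κ) {s t : Set (Ordinal.{0} → Bool)} (hs : Meager κ s)
    (ht : Meager κ t) : Meager κ (s ∪ t) := by
  have h := meager_iUnion (f := fun b : Bool => if b then s else t) hκ
    ((Cardinal.nat_lt_aleph0 2).le.trans hκ |>.trans_eq' (by simp))
    (by intro b; cases b <;> simpa)
  refine h.mono ?_
  intro x hx
  rcases hx with hx | hx
  · exact Set.mem_iUnion.mpr ⟨true, by simpa⟩
  · exact Set.mem_iUnion.mpr ⟨false, by simpa⟩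


/-! ### The Baire category theorem for the bounded topology -/

section Baire

variable (o : Ordinal.{0}) (D : Ordinal.{0} → Set (Ordinal.{0} → Bool)) (α₀ : Ordinal.{0}) (p₀ : Ordinal.{0} → Bool)

/-- Glue a transfinite sequence of conditions into a single pattern. -/
def glue (g : Ordinal.{0} → Ordinal.{0} × (Ordinal.{0} → Bool)) (i : Ordinal.{0}) : Ordinal.{0} → Bool := fun β =>
  if h : {j | j < i ∧ β < (g j).1}.Nonempty
  then (g (Ordinal.lt_wf.min _ h)).2 β else p₀ β

/-- The length of the glued condition at stage `i`. -/
def alen (g : Ordinal.{0} → Ordinal.{0} × (Ordinal.{0} → Bool)) (i : Ordinal.{0}) : Ordinal.{0} :=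
  max α₀ (⨆ j : i.ToType, (g ((((Ordinal.ToType.mk (o := i))).symm j : Set.Iio i) : Ordinal.{0})).1)

/-- One step of the construction: extend the condition `(αc, pc)` to one avoiding `D i`. -/
def bstep (i αc : Ordinal.{0}) (pc : Ordinal.{0} → Bool) : Ordinal.{0} × (Ordinal.{0} → Bool) :=
  @dite _ (∃ z : Ordinal.{0} × (Ordinal.{0} → Bool), z.1 < o ∧ Ext αc pc z.1 z.2 ∧ Bs z.1 z.2 ∩ D i = ∅)
    (Classical.dec _) (fun h => h.choose) (fun _ => (αc, pc))

/-- The transfinite sequence of conditions. -/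
def bseq : Ordinal.{0} → Ordinal.{0} × (Ordinal.{0} → Bool) :=
  Ordinal.lt_wf.fix fun i prev =>
    let g : Ordinal.{0} → Ordinal.{0} × (Ordinal.{0} → Bool) := fun j => if h : j < i then prev j h else (0, p₀)
    bstep o D i (alen α₀ g i) (glue p₀ g i)

theorem glue_congr {g₁ g₂ : Ordinal.{0} → Ordinal.{0} × (Ordinal.{0} → Bool)} {i : Ordinal.{0}}
    (h : ∀ j < i, g₁ j = g₂ j) : glue p₀ g₁ i = glue p₀ g₂ i := by
  funext β
  unfold glue
  have hset : {j | j < i ∧ β < (g₁ j).1} = {j | j < i ∧ β < (g₂ j).1} := by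
    ext j
    constructor <;> rintro ⟨hj, hb⟩ <;> refine ⟨hj, ?_⟩
    · rwa [← h j hj]
    · rwa [h j hj]
  rw [hset]
  split
  · next hne => rw [h _ (Ordinal.lt_wf.min_mem _ hne).1]
  · rfl

theorem alen_congr {g₁ g₂ : Ordinal.{0} → Ordinal.{0} × (Ordinal.{0} → Bool)} {i : Ordinal.{0}}
    (h : ∀ j < i, g₁ j = g₂ j) : alen α₀ g₁ i = alen α₀ g₂ i := by
  unfold alen
  congr 1
  exact iSup_congr fun j => by
    rw [h _ ((((Ordinal.ToType.mk (o := i))).symm j) : Set.Iio i).2]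

theorem bseq_eq (i : Ordinal.{0}) :
    bseq o D α₀ p₀ i = bstep o D i (alen α₀ (bseq o D α₀ p₀) i) (glue p₀ (bseq o D α₀ p₀) i) := by
  have h0 : bseq o D α₀ p₀ i =
      bstep o D i (alen α₀ (fun j => if h : j < i then bseq o D α₀ p₀ j else (0, p₀)) i)
        (glue p₀ (fun j => if h : j < i then bseq o D α₀ p₀ j else (0, p₀)) i) :=
    WellFounded.fix_eq _ _ i
  rw [h0]
  exact congrArg₂ (bstep o D i) (alen_congr α₀ fun j hj => dif_pos hj)
    (glue_congr p₀ fun j hj => dif_pos hj)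


theorem bstep_spec {i αc : Ordinal.{0}} {pc : Ordinal.{0} → Bool}
    (h : ∃ z : Ordinal.{0} × (Ordinal.{0} → Bool), z.1 < o ∧ Ext αc pc z.1 z.2 ∧ Bs z.1 z.2 ∩ D i = ∅) :
    (bstep o D i αc pc).1 < o ∧ Ext αc pc (bstep o D i αc pc).1 (bstep o D i αc pc).2 ∧
      Bs (bstep o D i αc pc).1 (bstep o D i αc pc).2 ∩ D i = ∅ := by
  unfold bstep
  rw [dif_pos h]
  exact h.choose_spec

end Baire

section BaireProof

variable {κ : Cardinal.{0}} (hreg : κ.IsRegular) (hunc : ℵ₀ < κ)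
  {D : Ordinal.{0} → Set (Ordinal.{0} → Bool)} (hD : ∀ i < κ.ord, ND κ (D i))
  {α₀ : Ordinal.{0}} (hα₀ : α₀ < κ.ord) (p₀ : Ordinal.{0} → Bool)

include hreg hD hα₀

omit hreg hD hα₀ in
theorem len_le_alen (g : Ordinal.{0} → Ordinal.{0} × (Ordinal.{0} → Bool)) {j i : Ordinal.{0}} (hj : j < i) :
    (g j).1 ≤ alen α₀ g i := by
  refine le_trans ?_ (le_max_right _ _)
  have := Ordinal.le_iSup
    (fun jj : i.ToType => (g ((((Ordinal.ToType.mk (o := i))).symm jj : Set.Iio i) : Ordinal.{0})).1)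
    (((Ordinal.ToType.mk (o := i))) ⟨j, hj⟩)
  simpa using this

theorem bseq_spec : ∀ i < κ.ord,
    alen α₀ (bseq κ.ord D α₀ p₀) i < κ.ord ∧
    (bseq κ.ord D α₀ p₀ i).1 < κ.ord ∧
    Ext (alen α₀ (bseq κ.ord D α₀ p₀) i) (glue p₀ (bseq κ.ord D α₀ p₀) i)
      (bseq κ.ord D α₀ p₀ i).1 (bseq κ.ord D α₀ p₀ i).2 ∧
    Bs (bseq κ.ord D α₀ p₀ i).1 (bseq κ.ord D α₀ p₀ i).2 ∩ D i = ∅ := by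
  intro i
  induction i using Ordinal.induction with
  | _ i IH =>
  intro hi
  set g := bseq κ.ord D α₀ p₀ with hg
  have halen : alen α₀ g i < κ.ord := by
    refine max_lt hα₀ (Ordinal.iSup_lt_ord ?_ ?_)
    · rw [Cardinal.mk_toType, hreg.cof_eq]
      exact Cardinal.lt_ord.1 hi
    · intro jj
      have hlt : ((((Ordinal.ToType.mk (o := i))).symm jj : Set.Iio i) : Ordinal.{0}) < i :=
        (((Ordinal.ToType.mk (o := i))).symm jj).2
      exact (IH _ hlt (hlt.trans hi)).2.1
  have hex : ∃ z : Ordinal.{0} × (Ordinal.{0} → Bool), z.1 < κ.ord ∧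
      Ext (alen α₀ g i) (glue p₀ g i) z.1 z.2 ∧ Bs z.1 z.2 ∩ D i = ∅ := by
    obtain ⟨β, hβ, q, hext, hdisj⟩ := hD i hi (alen α₀ g i) halen (glue p₀ g i)
    exact ⟨(β, q), hβ, hext, hdisj⟩
  have hb := bstep_spec κ.ord D hex
  rw [← bseq_eq] at hb
  exact ⟨halen, hb.1, hb.2.1, hb.2.2⟩

theorem bseq_agree : ∀ j₂ < κ.ord, ∀ j₁ ≤ j₂, ∀ β < (bseq κ.ord D α₀ p₀ j₁).1,
    (bseq κ.ord D α₀ p₀ j₂).2 β = (bseq κ.ord D α₀ p₀ j₁).2 β := by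
  intro j₂
  induction j₂ using Ordinal.induction with
  | _ j₂ IH =>
  intro h2 j₁ hj₁ β hβ
  set g := bseq κ.ord D α₀ p₀ with hg
  rcases eq_or_lt_of_le hj₁ with rfl | hlt
  · rfl
  have hale : β < alen α₀ g j₂ := hβ.trans_le (len_le_alen g hlt)
  rw [(bseq_spec hreg hD hα₀ p₀ j₂ h2).2.2.1.2 β hale]
  show glue p₀ g j₂ β = _
  unfold glue
  have hS : {j | j < j₂ ∧ β < (g j).1}.Nonempty := ⟨j₁, hlt, hβ⟩
  rw [dif_pos hS]
  have hm := Ordinal.lt_wf.min_mem _ hS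
  have hmle : Ordinal.lt_wf.min _ hS ≤ j₁ :=
    not_lt.1 (Ordinal.lt_wf.not_lt_min _ (show j₁ ∈ {j | j < j₂ ∧ β < (g j).1} from ⟨hlt, hβ⟩))
  exact (IH j₁ hlt (hlt.trans h2) _ hmle β hm.2).symm

theorem bseq_base : ∀ j < κ.ord, ∀ β < α₀, (bseq κ.ord D α₀ p₀ j).2 β = p₀ β := by
  intro j
  induction j using Ordinal.induction with
  | _ j IH =>
  intro hj β hβ
  set g := bseq κ.ord D α₀ p₀ with hg
  have hale : β < alen α₀ g j := hβ.trans_le (le_max_left _ _)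
  rw [(bseq_spec hreg hD hα₀ p₀ j hj).2.2.1.2 β hale]
  show glue p₀ g j β = _
  unfold glue
  split
  · next hS =>
    have hm := Ordinal.lt_wf.min_mem _ hS
    exact IH _ hm.1 (hm.1.trans hj) β hβ
  · rfl

theorem baire : ∃ x ∈ Bs α₀ p₀, ∀ i < κ.ord, x ∉ D i := by
  set g := bseq κ.ord D α₀ p₀ with hg
  refine ⟨glue p₀ g κ.ord, ?_, ?_⟩
  · intro β hβ
    show glue p₀ g κ.ord β = p₀ β
    unfold glue
    split
    · next hS =>
      have hm := Ordinal.lt_wf.min_mem _ hS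
      exact bseq_base hreg hD hα₀ p₀ _ hm.1 β hβ
    · rfl
  · intro i hi hmem
    have hxB : glue p₀ g κ.ord ∈ Bs (g i).1 (g i).2 := by
      intro β hβ
      show glue p₀ g κ.ord β = _
      unfold glue
      have hS : {j | j < κ.ord ∧ β < (g j).1}.Nonempty := ⟨i, hi, hβ⟩
      rw [dif_pos hS]
      have hm := Ordinal.lt_wf.min_mem _ hS
      have hmle : Ordinal.lt_wf.min _ hS ≤ i :=
        not_lt.1 (Ordinal.lt_wf.not_lt_min _ (show i ∈ {j | j < κ.ord ∧ β < (g j).1} from ⟨hi, hβ⟩))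
      exact (bseq_agree hreg hD hα₀ p₀ i hi _ hmle β hm.2).symm
    have := (bseq_spec hreg hD hα₀ p₀ i hi).2.2.2
    exact absurd (Set.mem_inter hxB hmem) (by rw [this]; exact notMem_empty _)

end BaireProof

/-! ### Consequences of the Baire category theorem -/

theorem exists_avoid_meager {κ : Cardinal.{0}} (hreg : κ.IsRegular) (hunc : ℵ₀ < κ)
    {s : Set (Ordinal.{0} → Bool)} (hs : Meager κ s) {α₀ : Ordinal.{0}} (hα₀ : α₀ < κ.ord)
    (p₀ : Ordinal.{0} → Bool) : ∃ x ∈ Bs α₀ p₀, x ∉ s := by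
  obtain ⟨ι, F, hι, hnd, hcover⟩ := hs
  by_cases hne : Nonempty ι
  · have hcard : #ι ≤ #κ.ord.ToType := by rwa [Cardinal.mk_toType, Cardinal.card_ord]
    obtain ⟨e⟩ := (Cardinal.le_def _ _).1 hcard
    set surj : κ.ord.ToType → ι := Function.invFun e with hsurj
    set D : Ordinal.{0} → Set (Ordinal.{0} → Bool) := fun i =>
      if h : i < κ.ord then F (surj ((Ordinal.ToType.mk (o := κ.ord)) ⟨i, h⟩)) else ∅ with hD0
    have hD : ∀ i < κ.ord, ND κ (D i) := by
      intro i hi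
      rw [hD0]
      simp only [dif_pos hi]
      exact hnd _
    obtain ⟨x, hxB, hx⟩ := baire hreg hD hα₀ p₀
    refine ⟨x, hxB, fun hxs => ?_⟩
    obtain ⟨j, hj⟩ := Set.mem_iUnion.mp (hcover hxs)
    obtain ⟨t, ht⟩ := (Function.invFun_surjective e.injective) j
    set i : Set.Iio κ.ord := ((Ordinal.ToType.mk (o := κ.ord))).symm t with hi0
    refine hx i i.2 ?_
    have : D (i : Ordinal.{0}) = F j := by
      show (if h : (i : Ordinal.{0}) < κ.ord
        then F (surj ((Ordinal.ToType.mk (o := κ.ord)) ⟨(i : Ordinal.{0}), h⟩)) else ∅) = F j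
      rw [dif_pos (show (i : Ordinal.{0}) < κ.ord from i.2)]
      show F (surj ((Ordinal.ToType.mk (o := κ.ord)) i)) = F j
      rw [hi0, OrderIso.apply_symm_apply, hsurj, ht]
    rwa [this]
  · exact ⟨p₀, self_mem_Bs _ _, fun hxs => by obtain ⟨j, -⟩ := Set.mem_iUnion.mp (hcover hxs); exact hne ⟨j⟩⟩

theorem not_meager_univ {κ : Cardinal.{0}} (hreg : κ.IsRegular) (hunc : ℵ₀ < κ) :
    ¬ Meager κ (Set.univ : Set (Ordinal.{0} → Bool)) := by
  intro h
  obtain ⟨x, -, hx⟩ := exists_avoid_meager hreg hunc h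
    (Cardinal.isSuccLimit_ord hunc.le).pos (fun _ => false)
  exact hx trivial

/-! ### Baire property -/

variable (κ) in
def MOpen (v : Set (Ordinal.{0} → Bool)) : Prop := ∀ x ∈ v, ∃ α < κ.ord, Bs α x ⊆ v

variable (κ) in
def BP (s : Set (Ordinal.{0} → Bool)) : Prop :=
  ∃ v, MOpen κ v ∧ Meager κ ((s \ v) ∪ (v \ s))

variable (κ) in
def ICompl (v : Set (Ordinal.{0} → Bool)) : Set (Ordinal.{0} → Bool) :=
  {x | ∃ α < κ.ord, Bs α x ∩ v = ∅}

theorem mopen_ICompl (v : Set (Ordinal.{0} → Bool)) : MOpen κ (ICompl κ v) := by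
  rintro x ⟨α, hα, hdisj⟩
  exact ⟨α, hα, fun y hy => ⟨α, hα, by rwa [Bs_eq_of_mem hy]⟩⟩

theorem ICompl_subset (v : Set (Ordinal.{0} → Bool)) : ICompl κ v ⊆ vᶜ := by
  rintro x ⟨α, hα, hdisj⟩ hxv
  exact absurd (Set.mem_inter (self_mem_Bs α x) hxv) (by rw [hdisj]; exact notMem_empty _)

theorem nd_frontier {v : Set (Ordinal.{0} → Bool)} (hv : MOpen κ v) :
    ND κ (vᶜ \ ICompl κ v) := by
  intro α hα p
  by_cases hd : Bs α p ∩ v = ∅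
  · refine ⟨α, hα, p, ⟨le_refl _, fun _ _ => rfl⟩, ?_⟩
    apply Set.eq_empty_of_forall_notMem
    rintro y ⟨hyB, -, hyI⟩
    exact hyI ⟨α, hα, by rwa [Bs_eq_of_mem hyB]⟩
  · obtain ⟨x, hxB, hxv⟩ := Set.inter_nonempty.1 (Set.nonempty_iff_ne_empty.2 hd)
    obtain ⟨β, hβ, hsub⟩ := hv x hxv
    refine ⟨max α β, max_lt hα hβ, x, ⟨le_max_left _ _, fun γ hγ => hxB γ hγ⟩, ?_⟩
    apply Set.eq_empty_of_forall_notMem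
    rintro y ⟨hyB, hyc, -⟩
    exact hyc (hsub (Bs_anti (le_max_right _ _) x hyB))

theorem BP_open {v : Set (Ordinal.{0} → Bool)} (hκ : ℵ₀ ≤ κ) (hv : MOpen κ v) : BP κ v :=
  ⟨v, hv, by simpa using meager_empty hκ⟩

theorem BP_compl {s : Set (Ordinal.{0} → Bool)} (hκ : ℵ₀ ≤ κ) (hs : BP κ s) : BP κ sᶜ := by
  obtain ⟨v, hv, hm⟩ := hs
  refine ⟨ICompl κ v, mopen_ICompl v, Meager.mono ?_ (hm.union hκ
    (meager_of_ND hκ (nd_frontier hv)))⟩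
  rintro x (⟨hx1, hx2⟩ | ⟨hx1, hx2⟩)
  · by_cases hxv : x ∈ v
    · exact Or.inl (Or.inr ⟨hxv, hx1⟩)
    · exact Or.inr ⟨hxv, hx2⟩
  · exact Or.inl (Or.inl ⟨not_not.1 hx2, ICompl_subset v hx1⟩)

theorem BP_iUnion (hκ : ℵ₀ ≤ κ) {ι : Type} (hι : #ι ≤ κ) {f : ι → Set (Ordinal.{0} → Bool)}
    (hf : ∀ i, BP κ (f i)) : BP κ (⋃ i, f i) := by
  choose v hv hm using hf
  refine ⟨⋃ i, v i, ?_, Meager.mono ?_ (meager_iUnion hκ hι hm)⟩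
  · intro x hx
    obtain ⟨i, hi⟩ := Set.mem_iUnion.mp hx
    obtain ⟨α, hα, hsub⟩ := hv i x hi
    exact ⟨α, hα, hsub.trans (Set.subset_iUnion v i)⟩
  · rintro x (⟨hx1, hx2⟩ | ⟨hx1, hx2⟩)
    · obtain ⟨i, hi⟩ := Set.mem_iUnion.mp hx1
      exact Set.mem_iUnion.mpr ⟨i, Or.inl ⟨hi, fun h => hx2 (Set.mem_iUnion.mpr ⟨i, h⟩)⟩⟩
    · obtain ⟨i, hi⟩ := Set.mem_iUnion.mp hx1
      exact Set.mem_iUnion.mpr ⟨i, Or.inr ⟨hi, fun h => hx2 (Set.mem_iUnion.mpr ⟨i, h⟩)⟩⟩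

theorem gborel_bp {κ : Cardinal.{0}} (hunc : ℵ₀ < κ) {s : Set (Ordinal.{0} → Bool)}
    (hs : GBorel (gbTop κ Bool) κ s) : BP κ s := by
  induction hs with
  | isOpen s hs =>
    exact BP_open hunc.le ((isOpen_iff κ (Cardinal.isSuccLimit_ord hunc.le).pos).1 hs)
  | compl s hs ih => exact BP_compl hunc.le ih
  | iUnion ι f hι h ih => exact BP_iUnion hunc.le hι ih
  | iInter ι f hι h ih =>
    rw [show ⋂ i, f i = (⋃ i, (f i)ᶜ)ᶜ by simp]
    exact BP_compl hunc.le (BP_iUnion hunc.le hι fun i => BP_compl hunc.le (ih i))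

theorem BP.localize {κ : Cardinal.{0}} (hreg : κ.IsRegular) (hunc : ℵ₀ < κ)
    {s : Set (Ordinal.{0} → Bool)} (hs : BP κ s) (hnm : ¬ Meager κ s) :
    ∃ α < κ.ord, ∃ p, Meager κ (Bs α p \ s) := by
  obtain ⟨v, hv, hm⟩ := hs
  rcases Set.eq_empty_or_nonempty v with rfl | ⟨x, hxv⟩
  · exact absurd (Meager.mono (fun y hy => Or.inl ⟨hy, fun h => h.elim⟩) hm) hnm
  · obtain ⟨α, hα, hsub⟩ := hv x hxv
    exact ⟨α, hα, x, Meager.mono (fun y ⟨hy1, hy2⟩ => Or.inr ⟨hsub hy1, hy2⟩) hm⟩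


/-! ### Flip homeomorphisms and the zero-one law -/

variable (κ) in
def flipMap (α : Ordinal.{0}) (d : Ordinal.{0} → Bool) (x : Ordinal.{0} → Bool) :
    Ordinal.{0} → Bool := fun β => if β < α then xor (x β) (d β) else x β

theorem flipMap_flipMap (α : Ordinal.{0}) (d x : Ordinal.{0} → Bool) :
    flipMap α d (flipMap α d x) = x := by
  funext β
  unfold flipMap
  by_cases h : β < α <;> simp [h, Bool.xor_assoc]

theorem Bs_flipMap (α β : Ordinal.{0}) (d r : Ordinal.{0} → Bool) :
    flipMap α d ⁻¹' (Bs β r) = Bs β (flipMap α d r) := by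
  ext x
  constructor <;> intro hx γ hγ
  · have h1 := hx γ hγ
    unfold flipMap at h1 ⊢
    by_cases h : γ < α <;> simp only [if_pos, if_neg, h, if_true, if_false] at h1 ⊢
    · rw [← h1]
      simp [Bool.xor_assoc]
    · exact h1
  · have h1 := hx γ hγ
    show flipMap α d x γ = r γ
    unfold flipMap at h1 ⊢
    by_cases h : γ < α <;> simp only [if_pos, if_neg, h, if_true, if_false] at h1 ⊢
    · rw [h1]
      simp [Bool.xor_assoc]
    · exact h1

theorem flipMap_congr_at {α : Ordinal.{0}} {d x y : Ordinal.{0} → Bool} {γ : Ordinal.{0}}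
    (h : x γ = y γ) : flipMap α d x γ = flipMap α d y γ := by
  unfold flipMap
  rw [h]

theorem ND_flipMap {κ : Cardinal.{0}} (α : Ordinal.{0}) (d : Ordinal.{0} → Bool)
    {s : Set (Ordinal.{0} → Bool)} (hs : ND κ s) : ND κ (flipMap α d ⁻¹' s) := by
  intro β hβ p
  obtain ⟨β', hβ', q', hext, hdisj⟩ := hs β hβ (flipMap α d p)
  refine ⟨β', hβ', flipMap α d q', ⟨hext.1, fun γ hγ => ?_⟩, ?_⟩
  · calc flipMap α d q' γ = flipMap α d (flipMap α d p) γ := flipMap_congr_at (hext.2 γ hγ)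
      _ = p γ := congrFun (flipMap_flipMap α d p) γ
  · apply Set.eq_empty_of_forall_notMem
    rintro y ⟨hy1, hy2⟩
    have h3 : flipMap α d y ∈ Bs β' q' := fun γ hγ =>
      (flipMap_congr_at (hy1 γ hγ)).trans (congrFun (flipMap_flipMap α d q') γ)
    have h4 : flipMap α d y ∈ s := hy2
    have h5 := Set.mem_inter h3 h4
    rw [hdisj] at h5
    exact h5

theorem Meager_flipMap {κ : Cardinal.{0}} (α : Ordinal.{0}) (d : Ordinal.{0} → Bool)
    {s : Set (Ordinal.{0} → Bool)} (hs : Meager κ s) : Meager κ (flipMap α d ⁻¹' s) := by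
  obtain ⟨ι, F, hι, hnd, hcover⟩ := hs
  exact ⟨ι, fun i => flipMap α d ⁻¹' (F i), hι, fun i => ND_flipMap α d (hnd i),
    by rw [← Set.preimage_iUnion]; exact Set.preimage_mono hcover⟩

theorem E0_flipMap {κ : Cardinal.{0}} {α : Ordinal.{0}} (hα : α < κ.ord)
    (d x : Ordinal.{0} → Bool) : E0 κ (flipMap α d x) x :=
  ⟨α, hα, fun β hβ _ => by unfold flipMap; rw [if_neg (not_lt.2 hβ)]⟩

theorem zero_one {κ : Cardinal.{0}} (hreg : κ.IsRegular) (hunc : ℵ₀ < κ)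
    (hpow : κ ^< κ = κ) {A : Set (Ordinal.{0} → Bool)} (hA : BP κ A)
    (hinv : ∀ η ξ, E0 κ η ξ → (η ∈ A ↔ ξ ∈ A)) : Meager κ A ∨ Meager κ Aᶜ := by
  by_cases hm : Meager κ A
  · exact Or.inl hm
  right
  obtain ⟨α, hα, p, hloc⟩ := BP.localize hreg hunc hA hm
  set Q : (α.ToType → Bool) → (Ordinal.{0} → Bool) := fun c γ =>
    if h : γ < α then c ((Ordinal.ToType.mk (o := α)) ⟨γ, h⟩) else false with hQ
  have hpiece : ∀ c, Meager κ (Bs α (Q c) \ A) := by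
    intro c
    set d : Ordinal.{0} → Bool := fun γ => xor (p γ) (Q c γ) with hd
    refine Meager.mono ?_ (Meager_flipMap α d hloc)
    rintro x ⟨hx1, hx2⟩
    constructor
    · intro γ hγ
      show (if γ < α then xor (x γ) (xor (p γ) (Q c γ)) else x γ) = p γ
      rw [if_pos hγ, hx1 γ hγ]
      cases p γ <;> cases Q c γ <;> rfl
    · intro hmem
      exact hx2 ((hinv _ _ (E0_flipMap hα d x)).1 hmem)
  have hcover : Aᶜ ⊆ ⋃ c : α.ToType → Bool, (Bs α (Q c) \ A) := by
    intro x hx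
    refine Set.mem_iUnion.mpr ⟨fun t => x (((Ordinal.ToType.mk (o := α))).symm t : Set.Iio α), ?_, hx⟩
    intro γ hγ
    show x γ = if h : γ < α
      then x (((Ordinal.ToType.mk (o := α)).symm ((Ordinal.ToType.mk (o := α)) ⟨γ, h⟩) : Set.Iio α) : Ordinal.{0}) else false
    rw [dif_pos hγ, OrderIso.symm_apply_apply]
  have hcard : #(α.ToType → Bool) ≤ κ := by
    have h1 : #(α.ToType → Bool) = (2 : Cardinal.{0}) ^ #α.ToType := by
      rw [← Cardinal.power_def Bool α.ToType, Cardinal.mk_bool]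
    rw [h1, Cardinal.mk_toType]
    calc (2 : Cardinal.{0}) ^ α.card ≤ κ ^ α.card :=
          Cardinal.power_le_power_right ((Cardinal.nat_lt_aleph0 2).le.trans hunc.le |>.trans_eq'
            (by norm_num))
      _ ≤ κ ^< κ := Cardinal.le_powerlt κ (Cardinal.lt_ord.1 hα)
      _ = κ := hpow
  exact Meager.mono hcover (meager_iUnion hunc.le hcard hpiece)

/-! ### Each `E0`-class is meager -/

theorem meager_E0_class {κ : Cardinal.{0}} (hreg : κ.IsRegular) (hunc : ℵ₀ < κ)
    (η : Ordinal.{0} → Bool) : Meager κ {ξ | E0 κ ξ η} := by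
  set a : κ.ord.ToType → Ordinal.{0} := fun t => (((Ordinal.ToType.mk (o := κ.ord))).symm t : Set.Iio κ.ord)
    with ha
  have halt : ∀ t, a t < κ.ord := fun t => (((Ordinal.ToType.mk (o := κ.ord))).symm t).2
  refine ⟨κ.ord.ToType, fun t => {ξ | ∀ β, a t ≤ β → β < κ.ord → ξ β = η β}, ?_, ?_, ?_⟩
  · rw [Cardinal.mk_toType, Cardinal.card_ord]
  · intro t β hβ p
    set γ := max (a t) β with hγ0
    have hγ : γ < κ.ord := max_lt (halt t) hβ
    have hsucc : Order.succ γ < κ.ord := (Cardinal.isSuccLimit_ord hunc.le).succ_lt hγ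
    refine ⟨Order.succ γ, hsucc, fun δ => if δ = γ then !(η γ) else p δ,
      ⟨le_of_lt ((le_max_right _ _).trans_lt (Order.lt_succ γ)), fun δ hδ => ?_⟩, ?_⟩
    · show (if δ = γ then !η γ else p δ) = p δ
      rw [if_neg (ne_of_lt (hδ.trans_le (le_max_right _ _)))]
    · apply Set.eq_empty_of_forall_notMem
      rintro ξ ⟨hξ1, hξ2⟩
      have h1 : ξ γ = !(η γ) := by
        have h := hξ1 γ (Order.lt_succ γ)
        simpa using h
      have h2 : ξ γ = η γ := hξ2 γ (le_max_left _ _) hγ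
      rw [h2] at h1
      simp at h1
  · intro ξ hξ
    obtain ⟨α, hα, htail⟩ := hξ
    refine Set.mem_iUnion.mpr ⟨(Ordinal.ToType.mk (o := κ.ord)) ⟨α, hα⟩, fun β hβ1 hβ2 => ?_⟩
    refine htail β ?_ hβ2
    have h3 : a ((Ordinal.ToType.mk (o := κ.ord)) ⟨α, hα⟩) = α := by
      show (((Ordinal.ToType.mk (o := κ.ord)).symm ((Ordinal.ToType.mk (o := κ.ord)) ⟨α, hα⟩) : Set.Iio κ.ord) :
        Ordinal.{0}) = α
      rw [OrderIso.symm_apply_apply]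
    have hβ1' : a ((Ordinal.ToType.mk (o := κ.ord)) ⟨α, hα⟩) ≤ β := hβ1
    rwa [h3] at hβ1'

end E0Aux

/-- there is no Borel reduction of `E_0` to the identity relation on `2^κ`. -/
theorem E0_not_reducible_to_id (κ : Cardinal) (hreg : κ.IsRegular) (hunc : ℵ₀ < κ)
    (hpow : κ ^< κ = κ) :
    ¬ ∃ f : (Ordinal → Bool) → (Ordinal → Bool), GBorelFun κ f ∧
      ∀ η ξ, E0 κ η ξ ↔ (∀ β < κ.ord, f η β = f ξ β) := by
  rintro ⟨f, hf, hred⟩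
  have h0 : (0 : Ordinal) < κ.ord := (Cardinal.isSuccLimit_ord hunc.le).pos
  have hopen : ∀ β < κ.ord, ∀ b : Bool, @IsOpen _ (gbTop κ Bool) {x | x β = b} := by
    intro β hβ b
    refine (E0Aux.isOpen_iff κ h0).2 fun x hx => ⟨Order.succ β,
      (Cardinal.isSuccLimit_ord hunc.le).succ_lt hβ, fun y hy => ?_⟩
    have h1 := hy β (Order.lt_succ β)
    show y β = b
    rw [h1]
    exact hx
  set P : Ordinal → Bool → Set (Ordinal → Bool) := fun β b => f ⁻¹' {x | x β = b} with hP
  have hBP : ∀ β < κ.ord, ∀ b, E0Aux.BP κ (P β b) := fun β hβ b =>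
    E0Aux.gborel_bp hunc (hf _ (hopen β hβ b))
  have hinv : ∀ β < κ.ord, ∀ b, ∀ η ξ, E0 κ η ξ → (η ∈ P β b ↔ ξ ∈ P β b) := by
    intro β hβ b η ξ hE
    have h1 := (hred η ξ).1 hE β hβ
    show f η β = b ↔ f ξ β = b
    rw [h1]
  set A : κ.ord.ToType → Ordinal := fun t => (((Ordinal.ToType.mk (o := κ.ord))).symm t :
    Set.Iio κ.ord) with hA0
  have halt : ∀ t, A t < κ.ord := fun t => (((Ordinal.ToType.mk (o := κ.ord))).symm t).2
  have hAval : ∀ (z : Set.Iio κ.ord), A ((Ordinal.ToType.mk (o := κ.ord)) z) = (z : Ordinal) := by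
    intro z
    show ((((Ordinal.ToType.mk (o := κ.ord))).symm ((Ordinal.ToType.mk (o := κ.ord)) z) :
      Set.Iio κ.ord) : Ordinal) = (z : Ordinal)
    rw [OrderIso.symm_apply_apply]
  have hchoice : ∀ t : κ.ord.ToType, ∃ b, E0Aux.Meager κ (P (A t) b)ᶜ := by
    intro t
    rcases E0Aux.zero_one hreg hunc hpow (hBP (A t) (halt t) true)
      (fun η ξ hE => hinv (A t) (halt t) true η ξ hE) with h1 | h1
    · rcases E0Aux.zero_one hreg hunc hpow (hBP (A t) (halt t) false)
        (fun η ξ hE => hinv (A t) (halt t) false η ξ hE) with h2 | h2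
      · exfalso
        apply E0Aux.not_meager_univ hreg hunc
        refine E0Aux.Meager.mono ?_ (h1.union hunc.le h2)
        intro x _
        rcases Bool.eq_false_or_eq_true (f x (A t)) with hb | hb
        · exact Or.inl (show f x (A t) = true from hb)
        · exact Or.inr (show f x (A t) = false from hb)

      · exact ⟨false, h2⟩
    · exact ⟨true, h1⟩
  choose bfun hbfun using hchoice
  set M : Set (Ordinal → Bool) := ⋃ t, (P (A t) (bfun t))ᶜ with hM0
  have hM : E0Aux.Meager κ M :=
    E0Aux.meager_iUnion hunc.le
      (by rw [Cardinal.mk_toType, Cardinal.card_ord]) hbfun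
  have hconst : ∀ x, x ∉ M → ∀ β (hβ : β < κ.ord),
      f x β = bfun ((Ordinal.ToType.mk (o := κ.ord)) ⟨β, hβ⟩) := by
    intro x hx β hβ
    set t := (Ordinal.ToType.mk (o := κ.ord)) ⟨β, hβ⟩ with ht
    have h1 : x ∈ P (A t) (bfun t) := by
      by_contra h2
      exact hx (Set.mem_iUnion.mpr ⟨t, h2⟩)
    have h2 : A t = β := by rw [ht, hAval]
    rw [h2] at h1
    exact h1
  obtain ⟨x₁, -, hx₁⟩ := E0Aux.exists_avoid_meager hreg hunc hM h0 (fun _ => false)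
  have hM' : E0Aux.Meager κ (M ∪ {ξ | E0 κ ξ x₁}) :=
    hM.union hunc.le (E0Aux.meager_E0_class hreg hunc x₁)
  obtain ⟨x₂, -, hx₂⟩ := E0Aux.exists_avoid_meager hreg hunc hM' h0 (fun _ => false)
  have hx₂M : x₂ ∉ M := fun h => hx₂ (Or.inl h)
  have hx₂E : ¬ E0 κ x₂ x₁ := fun h => hx₂ (Or.inr h)
  exact hx₂E ((hred x₂ x₁).2 fun β hβ =>
    (hconst x₂ hx₂M β hβ).trans (hconst x₁ hx₁ β hβ).symm)
end
end

section
/- Let κ be an uncountable regular cardinal with κ^{<κ} = κ and S ⊆ lim(κ). Then E_S^* is Borel reducible to the identity on κ^κ: there is a Borel (indeed continuous) function f : 2^κ → κ^κ such that η E_S^* ξ iff f(η) = f(ξ). Here η E_S^* ξ iff for all α ∈ S there is β < α such that (η△ξ) is constant on (β, α). -/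
open Cardinal Set
open scoped Classical

noncomputable section

namespace EStarAux

/-- restriction of `η` to `α.ToType`. -/
def res (α : Ordinal) (η : Ordinal → Bool) : α.ToType → Bool :=
  fun x => η ((Ordinal.ToType.mk (o := α)).symm x)

/-- the tail-flip equivalence relation on `α.ToType → Bool`. -/
def R (α : Ordinal) (p q : α.ToType → Bool) : Prop :=
  ∃ β < α, ∃ b : Bool, ∀ γ, ∀ h : γ < α, β < γ →
    xor (p (Ordinal.ToType.mk (o := α) ⟨γ, h⟩)) (q (Ordinal.ToType.mk (o := α) ⟨γ, h⟩)) = b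

theorem R_equiv {α : Ordinal} (hα : Order.IsSuccLimit α) : Equivalence (R α) := by
  constructor
  · intro p
    exact ⟨0, hα.pos, false, fun γ h _ => Bool.xor_self _⟩
  · rintro p q ⟨β, hβ, b, hb⟩
    exact ⟨β, hβ, b, fun γ h hβγ => by rw [Bool.xor_comm]; exact hb γ h hβγ⟩
  · rintro p q r ⟨β₁, hβ₁, b₁, hb₁⟩ ⟨β₂, hβ₂, b₂, hb₂⟩
    refine ⟨max β₁ β₂, max_lt hβ₁ hβ₂, xor b₁ b₂, fun γ h hβγ => ?_⟩
    have h1 := hb₁ γ h (lt_of_le_of_lt (le_max_left _ _) hβγ)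
    have h2 := hb₂ γ h (lt_of_le_of_lt (le_max_right _ _) hβγ)
    rw [← h1, ← h2]
    cases p (Ordinal.ToType.mk (o := α) ⟨γ, h⟩) <;>
      cases q (Ordinal.ToType.mk (o := α) ⟨γ, h⟩) <;>
      cases r (Ordinal.ToType.mk (o := α) ⟨γ, h⟩) <;> rfl

/-- canonical representative of the `R α`-class. -/
def rep (α : Ordinal) (p : α.ToType → Bool) : α.ToType → Bool :=
  Quot.out (Quot.mk (R α) p)

theorem rep_eq_of_r {α : Ordinal} {p q : α.ToType → Bool} (h : R α p q) :
    rep α p = rep α q :=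
  congrArg Quot.out (Quot.sound h)

theorem r_of_rep_eq {α : Ordinal} (hα : Order.IsSuccLimit α) {p q : α.ToType → Bool}
    (h : rep α p = rep α q) : R α p q := by
  have : Quot.mk (R α) p = Quot.mk (R α) q := by
    rw [← Quot.out_eq (Quot.mk (R α) p), ← Quot.out_eq (Quot.mk (R α) q)]
    exact congrArg _ h
  exact ((R_equiv hα).eqvGen_iff).mp (Quot.eq.mp this)

theorem R_res_iff {α : Ordinal} (η ξ : Ordinal → Bool) :
    R α (res α η) (res α ξ) ↔
      ∃ β < α, ∃ b : Bool, ∀ γ, β < γ → γ < α → xor (η γ) (ξ γ) = b := by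
  constructor
  · rintro ⟨β, hβ, b, hb⟩
    refine ⟨β, hβ, b, fun γ hβγ h => ?_⟩
    simpa [res] using hb γ h hβγ
  · rintro ⟨β, hβ, b, hb⟩
    refine ⟨β, hβ, b, fun γ h hβγ => ?_⟩
    simpa [res] using hb γ hβγ h

end EStarAux

/-- `E_S^*` is reducible to the identity on `κ^κ` via a continuous
(hence Borel) function. -/
theorem EStar_reducible_to_id (κ : Cardinal) (hreg : κ.IsRegular) (hunc : ℵ₀ < κ)
    (hpow : κ ^< κ = κ) (S : Set Ordinal)
    (hS : S ⊆ {α | α < κ.ord ∧ Order.IsSuccLimit α}) :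
    ∃ f : (Ordinal → Bool) → (Ordinal → Ordinal),
      @Continuous _ _ (gbTop κ Bool) (gbTop κ Ordinal) f ∧
      ∀ η ξ, EStar S η ξ ↔ (∀ β < κ.ord, f η β = f ξ β) := by
  classical
  have hκ0 : ℵ₀ ≤ κ := hreg.aleph0_le
  have hord : (0 : Ordinal) < κ.ord := by
    rw [Cardinal.lt_ord]; simpa using (aleph0_pos.trans_le hκ0)
  -- a pairing equivalence on κ.ord.ToType
  have hmk : #(κ.ord.ToType × κ.ord.ToType) = #κ.ord.ToType := by
    rw [Cardinal.mk_prod, Cardinal.mk_toType, Cardinal.card_ord, Cardinal.lift_id,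
      Cardinal.mul_eq_self hκ0]
  obtain ⟨pr⟩ := Cardinal.eq.mp hmk
  set e := Ordinal.ToType.mk (o := κ.ord) with he
  -- decoding
  set P : Ordinal → Ordinal × Ordinal := fun β =>
    if h : β < κ.ord then
      ((e.symm (pr.symm (e ⟨β, h⟩)).1).1, (e.symm (pr.symm (e ⟨β, h⟩)).2).1)
    else (0, 0) with hP
  have hP1 : ∀ β, (P β).1 < κ.ord := by
    intro β
    rw [hP]
    by_cases h : β < κ.ord
    · simp only [dif_pos h]; exact (e.symm (pr.symm (e ⟨β, h⟩)).1).2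
    · simp only [dif_neg h]; exact hord
  -- encoding
  set enc : ∀ α, α < κ.ord → ∀ γ, γ < κ.ord → Ordinal := fun α hα γ hγ =>
    (e.symm (pr (e ⟨α, hα⟩, e ⟨γ, hγ⟩))).1 with henc
  have henclt : ∀ α hα γ hγ, enc α hα γ hγ < κ.ord := fun α hα γ hγ =>
    (e.symm (pr (e ⟨α, hα⟩, e ⟨γ, hγ⟩))).2
  have hPenc : ∀ α hα γ hγ, P (enc α hα γ hγ) = (α, γ) := by
    intro α hα γ hγ
    rw [hP]
    simp only [dif_pos (henclt α hα γ hγ)]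
    have h1 : (⟨enc α hα γ hγ, henclt α hα γ hγ⟩ : Iio κ.ord) =
        e.symm (pr (e ⟨α, hα⟩, e ⟨γ, hγ⟩)) := Subtype.ext rfl
    rw [h1]
    simp
  -- the reduction, factored through the decoded pair
  set F : (Ordinal → Bool) → Ordinal × Ordinal → Ordinal := fun η c =>
    if h : c.1 ∈ S ∧ c.2 < c.1 then
      (if EStarAux.rep c.1 (EStarAux.res c.1 η)
          (Ordinal.ToType.mk (o := c.1) ⟨c.2, h.2⟩) = true then 1 else 0)
    else 0 with hF
  set f : (Ordinal → Bool) → (Ordinal → Ordinal) := fun η β => F η (P β) with hf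
  -- locality: f η β depends only on η below (P β).1
  have hloc : ∀ β (η ξ : Ordinal → Bool), (∀ γ < (P β).1, η γ = ξ γ) → f η β = f ξ β := by
    intro β η ξ hag
    have hres : EStarAux.res (P β).1 η = EStarAux.res (P β).1 ξ := by
      funext x
      exact hag _ ((Ordinal.ToType.mk (o := (P β).1)).symm x).2
    rw [hf]
    simp only [hF, hres]
  refine ⟨f, ?_, ?_⟩
  · -- continuity
    unfold gbTop
    rw [continuous_generateFrom_iff]
    rintro s ⟨a, ha, p, rfl⟩
    -- a bound a' < κ.ord dominating all (P β).1 for β < a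
    obtain ⟨a', ha', hdom⟩ : ∃ a' < κ.ord, ∀ β < a, (P β).1 < a' := by
      refine ⟨⨆ i : a.ToType, ((P ((Ordinal.ToType.mk (o := a)).symm i).1).1 + 1), ?_, ?_⟩
      · refine Ordinal.iSup_lt_ord ?_ fun i => ?_
        · rw [Cardinal.mk_toType, hreg.cof_ord]
          exact Cardinal.lt_ord.mp ha
        · rw [Ordinal.add_one_eq_succ]
          exact (Cardinal.isSuccLimit_ord hκ0).succ_lt (hP1 _)
      · intro β hβ
        refine lt_of_lt_of_le (b := (P β).1 + 1) ?_ ?_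
        · rw [Ordinal.add_one_eq_succ]; exact Order.lt_succ _
        · have := le_ciSup (f := fun i : a.ToType =>
            ((P ((Ordinal.ToType.mk (o := a)).symm i).1).1 + 1))
            (Ordinal.bddAbove_range _) ((Ordinal.ToType.mk (o := a)) ⟨β, hβ⟩)
          simpa using this
    have hkey : f ⁻¹' {ζ | ∀ β < a, ζ β = p β} =
        ⋃ η₀ ∈ f ⁻¹' {ζ | ∀ β < a, ζ β = p β}, {η | ∀ γ < a', η γ = η₀ γ} := by
      ext η
      simp only [Set.mem_iUnion, Set.mem_preimage, Set.mem_setOf_eq]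
      constructor
      · intro h
        exact ⟨η, h, fun γ _ => rfl⟩
      · rintro ⟨η₀, h₀, hag⟩ β hβ
        rw [hloc β η η₀ fun γ hγ => hag γ (hγ.trans (hdom β hβ))]
        exact h₀ β hβ
    rw [hkey, ← Set.sUnion_image]
    refine TopologicalSpace.GenerateOpen.sUnion _ ?_
    rintro t ⟨η₀, -, rfl⟩
    exact TopologicalSpace.GenerateOpen.basic _ ⟨a', ha', η₀, rfl⟩
  · -- the reduction property
    intro η ξ
    constructor
    · intro h β hβ
      rw [hf]
      by_cases hc : (P β).1 ∈ S ∧ (P β).2 < (P β).1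
      · have hrep : EStarAux.rep (P β).1 (EStarAux.res (P β).1 η) =
            EStarAux.rep (P β).1 (EStarAux.res (P β).1 ξ) :=
          EStarAux.rep_eq_of_r ((EStarAux.R_res_iff η ξ).mpr (h _ hc.1))
        simp only [hF, hrep]
      · simp only [hF, dif_neg hc]
    · intro h α hαS
      obtain ⟨hακ, hαlim⟩ := hS hαS
      have hrep : EStarAux.rep α (EStarAux.res α η) = EStarAux.rep α (EStarAux.res α ξ) := by
        funext x
        have hγα : ((Ordinal.ToType.mk (o := α)).symm x).1 < α :=
          ((Ordinal.ToType.mk (o := α)).symm x).2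
        set γ : Ordinal := ((Ordinal.ToType.mk (o := α)).symm x).1 with hγdef
        have hγκ : γ < κ.ord := hγα.trans hακ
        have hβ := h (enc α hακ γ hγκ) (henclt α hακ γ hγκ)
        simp only [hf] at hβ
        rw [hPenc α hακ γ hγκ] at hβ
        have hc : α ∈ S ∧ γ < α := ⟨hαS, hγα⟩
        rw [hF] at hβ
        simp only [dif_pos hc] at hβ
        have hx : (Ordinal.ToType.mk (o := α)) ⟨γ, hc.2⟩ = x := by
          have h2 : (⟨γ, hc.2⟩ : Iio α) = (Ordinal.ToType.mk (o := α)).symm x :=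
            Subtype.ext rfl
          rw [h2, OrderIso.apply_symm_apply]
        rw [hx] at hβ
        by_cases h1 : EStarAux.rep α (EStarAux.res α η) x = true <;>
          by_cases h2 : EStarAux.rep α (EStarAux.res α ξ) x = true
        · rw [h1, h2]
        · rw [if_pos h1, if_neg h2] at hβ; exact absurd hβ one_ne_zero
        · rw [if_neg h1, if_pos h2] at hβ; exact absurd hβ.symm one_ne_zero
        · rw [Bool.not_eq_true] at h1 h2; rw [h1, h2]
      exact (EStarAux.R_res_iff η ξ).mp (EStarAux.r_of_rep_eq hαlim hrep)
end
end

section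
/- Let κ be an uncountable regular cardinal with κ^{<κ} = κ and S ⊆ lim(κ). Then E_S is Borel reducible to E_0 on κ^κ: there is a continuous function f : 2^κ → κ^κ such that η E_S ξ iff {α : f(η)(α) ≠ f(ξ)(α)} is bounded in κ. Here E_S = E_S^* ∩ E_0, where η E_S^* ξ iff for all α ∈ S there is β < α with η△ξ constant on (β,α), and η E_0 ξ iff η△ξ has bounded support. -/
open Cardinal Set
open scoped Classical

noncomputable section

universe u v

namespace ESRedAux

/-- The relation "the symmetric difference is eventually constant below `i`". -/
def r (i : Ordinal.{u}) (η ξ : Ordinal.{u} → Bool) : Prop :=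
  i = 0 ∨ ∃ β < i, ∃ b : Bool, ∀ γ, β < γ → γ < i → xor (η γ) (ξ γ) = b

theorem r_refl (i : Ordinal.{u}) (η : Ordinal.{u} → Bool) : r i η η := by
  rcases eq_or_ne i 0 with h | h
  · exact Or.inl h
  · exact Or.inr ⟨0, pos_iff_ne_zero.2 h, false, fun γ _ _ => by simp⟩

theorem r_symm {i : Ordinal.{u}} {η ξ : Ordinal.{u} → Bool} (h : r i η ξ) : r i ξ η := by
  rcases h with h | ⟨β, hβ, b, hb⟩
  · exact Or.inl h
  · exact Or.inr ⟨β, hβ, b, fun γ h1 h2 => by rw [Bool.xor_comm]; exact hb γ h1 h2⟩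

theorem r_trans {i : Ordinal.{u}} {η ξ ζ : Ordinal.{u} → Bool}
    (h : r i η ξ) (h' : r i ξ ζ) : r i η ζ := by
  rcases h with h | ⟨β₁, hβ₁, b₁, hb₁⟩
  · exact Or.inl h
  rcases h' with h' | ⟨β₂, hβ₂, b₂, hb₂⟩
  · exact Or.inl h'
  refine Or.inr ⟨max β₁ β₂, max_lt hβ₁ hβ₂, xor b₁ b₂, fun γ h1 h2 => ?_⟩
  have e1 := hb₁ γ (lt_of_le_of_lt (le_max_left _ _) h1) h2
  have e2 := hb₂ γ (lt_of_le_of_lt (le_max_right _ _) h1) h2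
  rw [← e1, ← e2]
  cases η γ <;> cases ξ γ <;> cases ζ γ <;> rfl

theorem r_of_eqOn {i : Ordinal.{u}} {η ξ : Ordinal.{u} → Bool}
    (h : ∀ γ < i, η γ = ξ γ) : r i η ξ := by
  rcases eq_or_ne i 0 with h0 | h0
  · exact Or.inl h0
  · exact Or.inr ⟨0, pos_iff_ne_zero.2 h0, false,
      fun γ _ h2 => by rw [h γ h2]; simp⟩

/-- The setoid of eventually-constant symmetric difference below `i`. -/
def st (i : Ordinal.{u}) : Setoid (Ordinal.{u} → Bool) :=
  ⟨r i, ⟨r_refl i, r_symm, r_trans⟩⟩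

/-- A canonical representative of the `st i`-class of `η`. -/
def rep (i : Ordinal.{u}) (η : Ordinal.{u} → Bool) : Ordinal.{u} → Bool :=
  (Quotient.mk (st i) η).out

theorem rep_eq_iff {i : Ordinal.{u}} {η ξ : Ordinal.{u} → Bool} :
    (∀ δ < i, rep i η δ = rep i ξ δ) ↔ r i η ξ := by
  constructor
  · intro h
    have h2 : (⟦rep i η⟧ : Quotient (st i)) = ⟦rep i ξ⟧ :=
      Quotient.sound (r_of_eqOn h)
    rw [rep, rep, Quotient.out_eq, Quotient.out_eq] at h2
    exact Quotient.exact h2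
  · intro h
    have h2 : (Quotient.mk (st i) η) = Quotient.mk (st i) ξ := Quotient.sound h
    rw [rep, rep, h2]
    exact fun _ _ => rfl

theorem rep_congr {i : Ordinal.{u}} {η ξ : Ordinal.{u} → Bool}
    (h : ∀ δ < i, η δ = ξ δ) : rep i η = rep i ξ := by
  rw [rep, rep, Quotient.sound (r_of_eqOn h)]

/-- A pairing of positions: to each `γ < κ.ord` we associate a pair of ordinals
below `κ.ord`, in such a way that every pair is attained cofinally often. -/
def gp (κ : Cardinal.{u})
    (e : κ.ord.ToType ≃ (κ.ord.ToType × κ.ord.ToType × κ.ord.ToType))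
    (γ : Ordinal.{u}) : Ordinal.{u} × Ordinal.{u} :=
  if h : γ < κ.ord then
    ((((Ordinal.ToType.mk (o := κ.ord)).symm
        (e ((Ordinal.ToType.mk (o := κ.ord)) ⟨γ, h⟩)).1 : Set.Iio κ.ord) : Ordinal.{u}),
     (((Ordinal.ToType.mk (o := κ.ord)).symm
        (e ((Ordinal.ToType.mk (o := κ.ord)) ⟨γ, h⟩)).2.1 : Set.Iio κ.ord) : Ordinal.{u}))
  else (0, 0)

theorem gp_fst_lt {κ : Cardinal.{u}}
    {e : κ.ord.ToType ≃ (κ.ord.ToType × κ.ord.ToType × κ.ord.ToType)}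
    {γ : Ordinal.{u}} (h : γ < κ.ord) : (gp κ e γ).1 < κ.ord := by
  rw [gp, dif_pos h]
  exact ((Ordinal.ToType.mk (o := κ.ord)).symm _).2

theorem gp_surj {κ : Cardinal.{u}}
    (e : κ.ord.ToType ≃ (κ.ord.ToType × κ.ord.ToType × κ.ord.ToType))
    {i δ α : Ordinal.{u}} (hi : i < κ.ord) (hδ : δ < κ.ord) (hα : α < κ.ord) :
    ∃ γ, α ≤ γ ∧ γ < κ.ord ∧ gp κ e γ = (i, δ) := by
  by_contra hcon
  push_neg at hcon
  set γfun : κ.ord.ToType → Ordinal.{u} := fun t =>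
    (((Ordinal.ToType.mk (o := κ.ord)).symm
      (e.symm (Ordinal.ToType.mk (o := κ.ord) ⟨i, hi⟩,
        Ordinal.ToType.mk (o := κ.ord) ⟨δ, hδ⟩, t)) : Set.Iio κ.ord) : Ordinal.{u}) with hγfun
  have hltκ : ∀ t, γfun t < κ.ord := fun t =>
    ((Ordinal.ToType.mk (o := κ.ord)).symm _).2
  have hgp : ∀ t, gp κ e (γfun t) = (i, δ) := by
    intro t
    rw [gp, dif_pos (hltκ t)]
    have h1 : (⟨γfun t, hltκ t⟩ : Set.Iio κ.ord) =
        (Ordinal.ToType.mk (o := κ.ord)).symm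
          (e.symm (Ordinal.ToType.mk (o := κ.ord) ⟨i, hi⟩,
            Ordinal.ToType.mk (o := κ.ord) ⟨δ, hδ⟩, t)) := rfl
    rw [h1, OrderIso.apply_symm_apply, Equiv.apply_symm_apply]
    simp
  have hltα : ∀ t, γfun t < α := by
    intro t
    by_contra hle
    exact hcon (γfun t) (not_lt.1 hle) (hltκ t) (hgp t)
  have hinj : Function.Injective
      (fun t => Ordinal.ToType.mk (o := α) ⟨γfun t, hltα t⟩) := by
    intro t1 t2 h
    have h2 := (Ordinal.ToType.mk (o := α)).injective h
    have h3 : γfun t1 = γfun t2 := Subtype.mk_eq_mk.1 h2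
    have h4 : (⟨γfun t1, hltκ t1⟩ : Set.Iio κ.ord) = ⟨γfun t2, hltκ t2⟩ :=
      Subtype.ext h3
    have h4' : (Ordinal.ToType.mk (o := κ.ord)).symm
        (e.symm (Ordinal.ToType.mk (o := κ.ord) ⟨i, hi⟩,
          Ordinal.ToType.mk (o := κ.ord) ⟨δ, hδ⟩, t1)) =
        (Ordinal.ToType.mk (o := κ.ord)).symm
        (e.symm (Ordinal.ToType.mk (o := κ.ord) ⟨i, hi⟩,
          Ordinal.ToType.mk (o := κ.ord) ⟨δ, hδ⟩, t2)) := h4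
    have h5 := e.symm.injective ((Ordinal.ToType.mk (o := κ.ord)).symm.injective h4')
    exact congrArg (fun p => p.2.2) h5
  have hle := Cardinal.mk_le_of_injective hinj
  rw [Cardinal.mk_toType, Cardinal.mk_toType, Cardinal.card_ord] at hle
  exact absurd hle (Cardinal.lt_ord.1 hα).not_ge

/-- Packing two bits into a (small-universe) ordinal. -/
def pack (b c : Bool) : Ordinal.{v} :=
  ((b.toNat * 2 + c.toNat : ℕ) : Ordinal.{v})

theorem pack_inj {b c b' c' : Bool} (h : pack.{v} b c = pack.{v} b' c') :
    b = b' ∧ c = c' := by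
  rw [pack, pack, Nat.cast_inj] at h
  revert h
  cases b <;> cases b' <;> cases c <;> cases c' <;> simp

/-- The second bit coded at position `γ`: a digit of the representative of the
`∼`-class of `η` below `(gp κ e γ).1`, when relevant. -/
def bit (κ : Cardinal.{u})
    (e : κ.ord.ToType ≃ (κ.ord.ToType × κ.ord.ToType × κ.ord.ToType))
    (S : Set Ordinal.{u}) (η : Ordinal.{u} → Bool) (γ : Ordinal.{u}) : Bool :=
  if (gp κ e γ).1 ∈ S ∧ (gp κ e γ).2 < (gp κ e γ).1 then
    rep (gp κ e γ).1 η (gp κ e γ).2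
  else false

/-- The reduction function. -/
def F (κ : Cardinal.{u})
    (e : κ.ord.ToType ≃ (κ.ord.ToType × κ.ord.ToType × κ.ord.ToType))
    (S : Set Ordinal.{u}) (η : Ordinal.{u} → Bool) (γ : Ordinal.{u}) : Ordinal.{v} :=
  pack.{v} (η γ) (bit κ e S η γ)

theorem F_eq_iff {κ : Cardinal.{u}}
    {e : κ.ord.ToType ≃ (κ.ord.ToType × κ.ord.ToType × κ.ord.ToType)}
    {S : Set Ordinal.{u}} {η ξ : Ordinal.{u} → Bool} {γ : Ordinal.{u}} :
    F.{u, v} κ e S η γ = F.{u, v} κ e S ξ γ ↔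
      (η γ = ξ γ ∧ bit κ e S η γ = bit κ e S ξ γ) := by
  constructor
  · exact fun h => pack_inj h
  · rintro ⟨h1, h2⟩
    rw [F, F, h1, h2]

theorem bit_congr {κ : Cardinal.{u}}
    {e : κ.ord.ToType ≃ (κ.ord.ToType × κ.ord.ToType × κ.ord.ToType)}
    {S : Set Ordinal.{u}} {η ξ : Ordinal.{u} → Bool} {γ : Ordinal.{u}}
    (h : ∀ δ < (gp κ e γ).1, η δ = ξ δ) : bit κ e S η γ = bit κ e S ξ γ := by
  rw [bit, bit, rep_congr h]

end ESRedAux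

/-- `E_S = E_S^* ∩ E_0` is reducible to `E_0` on `κ^κ` via a continuous
function. -/
theorem ES_reducible_to_E0 (κ : Cardinal) (hreg : κ.IsRegular) (hunc : ℵ₀ < κ)
    (hpow : κ ^< κ = κ) (S : Set Ordinal)
    (hS : S ⊆ {α | α < κ.ord ∧ Order.IsSuccLimit α}) :
    ∃ f : (Ordinal → Bool) → (Ordinal → Ordinal),
      @Continuous _ _ (gbTop κ Bool) (gbTop κ Ordinal) f ∧
      ∀ η ξ, (EStar S η ξ ∧ E0 κ η ξ) ↔
        (∃ α < κ.ord, ∀ β, α ≤ β → β < κ.ord → f η β = f ξ β) := by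
  classical
  -- get the pairing equivalence
  have hT : #κ.ord.ToType = κ := by rw [Cardinal.mk_toType, Cardinal.card_ord]
  have hTT : #(κ.ord.ToType × κ.ord.ToType × κ.ord.ToType) = #κ.ord.ToType := by
    simp only [Cardinal.mk_prod, Cardinal.lift_id, hT,
      Cardinal.mul_eq_self hreg.aleph0_le]
  obtain ⟨e⟩ := Cardinal.eq.1 hTT.symm
  refine ⟨ESRedAux.F κ e S, ?_, ?_⟩
  · -- Continuity
    rw [gbTop, gbTop, continuous_generateFrom_iff]
    rintro s ⟨α, hα, p, rfl⟩
    letI : TopologicalSpace (Ordinal → Bool) := gbTop κ Bool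
    -- bound for the dependence of `F · β`, `β < α`, on the input
    set sb : Ordinal := ⨆ b : α.ToType,
      (ESRedAux.gp κ e (((Ordinal.ToType.mk (o := α)).symm b : Set.Iio α) : Ordinal)).1
      with hsb
    have hsbκ : sb < κ.ord := by
      apply Ordinal.iSup_lt_of_lt_cof
      · rw [Cardinal.mk_toType, hreg.cof_eq]
        exact Cardinal.lt_ord.1 hα
      · intro b
        exact ESRedAux.gp_fst_lt (lt_trans ((Ordinal.ToType.mk (o := α)).symm b).2 hα)
    set B : Ordinal := max α (sb + 1) with hB
    have hBκ : B < κ.ord := by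
      apply max_lt hα
      rw [Ordinal.add_one_eq_succ]
      exact (Cardinal.isSuccLimit_ord hreg.aleph0_le).succ_lt hsbκ
    have hsbB : sb < B := by
      refine lt_of_lt_of_le ?_ (le_max_right _ _)
      rw [Ordinal.add_one_eq_succ]
      exact Order.lt_succ sb
    have hdep : ∀ η ξ : Ordinal → Bool, (∀ δ < B, ξ δ = η δ) →
        ∀ β < α, ESRedAux.F κ e S ξ β = ESRedAux.F κ e S η β := by
      intro η ξ hξη β hβ
      have hgple : (ESRedAux.gp κ e β).1 ≤ sb := by
        have h0 := Ordinal.le_iSup (fun b : α.ToType =>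
          (ESRedAux.gp κ e (((Ordinal.ToType.mk (o := α)).symm b : Set.Iio α) : Ordinal)).1)
          (Ordinal.ToType.mk (o := α) ⟨β, hβ⟩)
        simpa using h0
      rw [ESRedAux.F_eq_iff]
      refine ⟨hξη β (lt_of_lt_of_le hβ (le_max_left _ _)),
        ESRedAux.bit_congr fun δ hδ => hξη δ ?_⟩
      exact lt_trans (lt_of_lt_of_le hδ hgple) hsbB
    have key : ESRedAux.F κ e S ⁻¹' {ζ | ∀ β < α, ζ β = p β} =
        ⋃ η : ↥(ESRedAux.F κ e S ⁻¹' {ζ | ∀ β < α, ζ β = p β}),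
          {ξ : Ordinal → Bool | ∀ δ < B, ξ δ = (η : Ordinal → Bool) δ} := by
      ext ξ
      simp only [Set.mem_iUnion, Set.mem_preimage, Set.mem_setOf_eq]
      constructor
      · intro hξ
        exact ⟨⟨ξ, hξ⟩, fun δ _ => rfl⟩
      · rintro ⟨⟨η, hη⟩, hξη⟩ β hβ
        rw [hdep η ξ hξη β hβ]
        exact hη β hβ
    rw [key]
    exact isOpen_iUnion fun η =>
      TopologicalSpace.isOpen_generateFrom_of_mem ⟨B, hBκ, η, rfl⟩
  · -- the reduction property
    intro η ξ
    constructor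
    · rintro ⟨hstar, α₀, hα₀, hE0⟩
      refine ⟨α₀, hα₀, fun β hβ hβκ => ?_⟩
      rw [ESRedAux.F_eq_iff]
      refine ⟨hE0 β hβ hβκ, ?_⟩
      rw [ESRedAux.bit, ESRedAux.bit]
      split
      · rename_i hcond
        have hr : ESRedAux.r (ESRedAux.gp κ e β).1 η ξ := Or.inr (hstar _ hcond.1)
        have : (Quotient.mk (ESRedAux.st (ESRedAux.gp κ e β).1) η) =
            Quotient.mk (ESRedAux.st (ESRedAux.gp κ e β).1) ξ := Quotient.sound hr
        rw [ESRedAux.rep, ESRedAux.rep, this]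
      · rfl
    · rintro ⟨α, hα, h⟩
      constructor
      · intro i hi
        have hiκ : i < κ.ord := (hS hi).1
        have hr : ESRedAux.r i η ξ := by
          rw [← ESRedAux.rep_eq_iff]
          intro δ hδ
          obtain ⟨γ, hγ1, hγ2, hγ3⟩ :=
            ESRedAux.gp_surj e hiκ (hδ.trans hiκ) hα
          have hbit := (ESRedAux.F_eq_iff.1 (h γ hγ1 hγ2)).2
          rw [ESRedAux.bit, ESRedAux.bit, hγ3] at hbit
          simp only at hbit
          rw [if_pos ⟨hi, hδ⟩, if_pos ⟨hi, hδ⟩] at hbit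
          exact hbit
        rcases hr with h0 | hgood
        · exact absurd h0 (hS hi).2.pos.ne'
        · exact hgood
      · exact ⟨α, hα, fun β hβ hβκ => (ESRedAux.F_eq_iff.1 (h β hβ hβκ)).1⟩
end
end

section
/- Let κ be regular uncountable and λ < κ regular, and assume ◊_κ(S^κ_λ) holds, witnessed by a sequence ⟨D_α : α ∈ S^κ_λ⟩ such that {α ∈ S^κ_λ : A ∩ α = D_α} is stationary for every A ⊆ κ. For A ⊆ κ define H(A) = {α ∈ S^κ_λ : D_α ⊆_* A ∩ α}, where for X, Y ⊆ α, X ⊆_* Y means there is β < α with X \ β ⊆ Y \ β. Then for all A, B ⊆ κ: A \ B is bounded in κ if and only if H(A) \ H(B) is not λ-stationary (i.e., H(A) \ H(B) misses some λ-club set). Hence H embeds ⟨P(κ), ⊆_*⟩ into ⟨P(κ), ⊆_{NS(λ)}⟩. -/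
open Cardinal Set
open scoped Classical

noncomputable section

/-- `C` is a club subset of the ordinal `δ`: a subset of `δ`, unbounded in `δ`, and
containing all of its (nonzero) limit points below `δ`. -/
def IsClubIn (C : Set Ordinal) (δ : Ordinal) : Prop :=
  C ⊆ Set.Iio δ ∧ (∀ β < δ, ∃ γ ∈ C, β < γ) ∧
    ∀ β < δ, β ≠ 0 → (∀ γ < β, ∃ ε ∈ C, γ < ε ∧ ε < β) → β ∈ C

/-- `S` is stationary in `δ`: it meets every club subset of `δ`. -/
def StatIn (S : Set Ordinal) (δ : Ordinal) : Prop :=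
  ∀ C, IsClubIn C δ → (S ∩ C).Nonempty

/-- `C` is a `λ`-club subset of `δ`: unbounded in `δ` and containing all of its
limit points of cofinality `λ` below `δ`. -/
def LClub (lam : Cardinal) (C : Set Ordinal) (δ : Ordinal) : Prop :=
  C ⊆ Set.Iio δ ∧ (∀ β < δ, ∃ γ ∈ C, β < γ) ∧
    ∀ β < δ, β.cof = lam → (∀ γ < β, ∃ ε ∈ C, γ < ε ∧ ε < β) → β ∈ C

/-- `S` is `λ`-stationary in `δ`: it meets every `λ`-club subset of `δ`. -/
def LStat (lam : Cardinal) (S : Set Ordinal) (δ : Ordinal) : Prop :=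
  ∀ C, LClub lam C δ → (S ∩ C).Nonempty

/-- `H(A) = {α ∈ S^κ_λ | D_α ⊆_* A ∩ α}`. -/
def Hmap (κ lam : Cardinal) (D : Ordinal → Set Ordinal) (A : Set Ordinal) : Set Ordinal :=
  {α | α < κ.ord ∧ α.cof = lam ∧ ∃ β < α, ∀ γ ∈ D α, β ≤ γ → γ ∈ A}

/-- given `◊_κ(S^κ_λ)`, the map `H` embeds `⟨P(κ), ⊆_*⟩` into
`⟨P(κ), ⊆_{NS(λ)}⟩`: `A \ B` is bounded iff `H(A) \ H(B)` is not `λ`-stationary. -/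
theorem diamond_embedding (κ lam : Cardinal) (hreg : κ.IsRegular) (hunc : ℵ₀ < κ)
    (hlam : lam.IsRegular) (hlt : lam < κ)
    (D : Ordinal → Set Ordinal)
    (hDsub : ∀ α, α < κ.ord → α.cof = lam → D α ⊆ Set.Iio α)
    (hdiamond : ∀ A ⊆ Set.Iio κ.ord,
      StatIn {α | α < κ.ord ∧ α.cof = lam ∧ A ∩ Set.Iio α = D α} κ.ord) :
    ∀ A ⊆ Set.Iio κ.ord, ∀ B ⊆ Set.Iio κ.ord,
      ((∃ β < κ.ord, ∀ γ ∈ A, γ ∉ B → γ < β) ↔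
        ¬ LStat lam (Hmap κ lam D A \ Hmap κ lam D B) κ.ord) := by
  intro A hA B hB
  have hκlim : Order.IsSuccLimit κ.ord := Cardinal.isSuccLimit_ord hunc.le
  have hcof : κ.ord.cof = κ := hreg.cof_eq
  have hlam0 : lam ≠ 0 := hlam.pos.ne'
  constructor
  · -- bounded ⇒ not λ-stationary
    rintro ⟨β, hβ, hbd⟩ hstat
    have hclub : LClub lam {x | β < x ∧ x < κ.ord} κ.ord := by
      refine ⟨fun x hx => hx.2, fun x hx => ?_, fun x hxκ hxcof hlim => ?_⟩
      · refine ⟨max x β + 1, ⟨?_, ?_⟩, ?_⟩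
        · rw [Ordinal.add_one_eq_succ]
          exact (le_max_right x β).trans_lt (Order.lt_succ _)
        · exact hκlim.succ_lt (max_lt hx hβ)
        · rw [Ordinal.add_one_eq_succ]
          exact (le_max_left x β).trans_lt (Order.lt_succ _)
      · have hx0 : x ≠ 0 := by
          intro h
          rw [h, Ordinal.cof_zero] at hxcof
          exact hlam0 hxcof.symm
        obtain ⟨ε, hε, _, hεx⟩ := hlim 0 (pos_iff_ne_zero.2 hx0)
        exact ⟨hε.1.trans hεx, hxκ⟩
    obtain ⟨α, ⟨hαA, hαB⟩, hβα, hακ⟩ := hstat {x | β < x ∧ x < κ.ord} hclub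
    obtain ⟨hα1, hα2, β', hβ', hsub⟩ := hαA
    refine hαB ⟨hα1, hα2, max β' β, max_lt hβ' hβα, fun γ hγ hge => ?_⟩
    have hγA : γ ∈ A := hsub γ hγ ((le_max_left _ _).trans hge)
    by_contra hγB
    exact absurd (hbd γ hγA hγB) (not_lt.2 ((le_max_right β' β).trans hge))
  · -- not λ-stationary ⇒ bounded
    intro hns
    by_contra hbd
    push_neg at hbd
    apply hns
    intro C hC
    obtain ⟨hCsub, hCunb, hCcl⟩ := hC
    -- A \ B is unbounded: ∀ x < κ.ord, ∃ γ ∈ A, γ ∉ B ∧ x ≤ γ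
    -- key step function
    have hstep : ∀ x < κ.ord, ∃ y, y < κ.ord ∧ x < y ∧ (∃ ε ∈ C, x < ε ∧ ε < y) ∧
        (∃ ε, ε ∈ A ∧ ε ∉ B ∧ x < ε ∧ ε < y) := by
      intro x hx
      obtain ⟨c, hc, hxc⟩ := hCunb x hx
      have hx1 : x + 1 < κ.ord := hκlim.succ_lt hx
      obtain ⟨a, haA, haB, hxa⟩ := hbd (x + 1) hx1
      have haκ : a < κ.ord := hA haA
      have hxa' : x < a := by
        rw [Ordinal.add_one_eq_succ, Order.succ_le_iff] at hxa
        exact hxa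
      refine ⟨max c a + 1, hκlim.succ_lt (max_lt (hCsub hc) haκ), ?_, ?_, ?_⟩
      · rw [Ordinal.add_one_eq_succ]
        exact hxc.trans_le ((le_max_left c a).trans (Order.le_succ _))
      · refine ⟨c, hc, hxc, ?_⟩
        rw [Ordinal.add_one_eq_succ]
        exact (le_max_left c a).trans_lt (Order.lt_succ _)
      · refine ⟨a, haA, haB, hxa', ?_⟩
        rw [Ordinal.add_one_eq_succ]
        exact (le_max_right c a).trans_lt (Order.lt_succ _)
    classical
    set F : Ordinal → Ordinal := fun x => if h : x < κ.ord then (hstep x h).choose else 0 with hF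
    set E : Set Ordinal := {x | x < κ.ord ∧ (∀ γ < x, ∃ ε ∈ C, γ < ε ∧ ε < x) ∧
      (∀ γ < x, ∃ ε, ε ∈ A ∧ ε ∉ B ∧ γ < ε ∧ ε < x)} with hE
    have hEclub : IsClubIn E κ.ord := by
      refine ⟨fun x hx => hx.1, ?_, ?_⟩
      · -- unbounded
        intro b hb
        set g : ℕ → Ordinal := fun n => Nat.rec (b + 1) (fun _ ih => F ih) n with hg
        have hg0 : g 0 = b + 1 := rfl
        have hgs : ∀ n, g (n + 1) = F (g n) := fun n => rfl
        have hglt : ∀ n, g n < κ.ord ∧ g n < g (n + 1) := by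
          intro n
          induction n with
          | zero =>
            have h0 : g 0 < κ.ord := hκlim.succ_lt hb
            constructor
            · exact h0
            · rw [hgs, hF]
              simp only [h0, dif_pos]
              exact (hstep (g 0) h0).choose_spec.2.1
          | succ n ih =>
            have h1 : g (n + 1) < κ.ord := by
              rw [hgs, hF]
              simp only [ih.1, dif_pos]
              exact (hstep (g n) ih.1).choose_spec.1
            refine ⟨h1, ?_⟩
            rw [hgs (n+1), hF]
            simp only [h1, dif_pos]
            exact (hstep (g (n+1)) h1).choose_spec.2.1
        have hspec : ∀ n, (∃ ε ∈ C, g n < ε ∧ ε < g (n+1)) ∧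
            (∃ ε, ε ∈ A ∧ ε ∉ B ∧ g n < ε ∧ ε < g (n+1)) := by
          intro n
          have h := (hglt n).1
          constructor
          · rw [hgs, hF]; simp only [h, dif_pos]
            exact (hstep (g n) h).choose_spec.2.2.1
          · rw [hgs, hF]; simp only [h, dif_pos]
            exact (hstep (g n) h).choose_spec.2.2.2
        set α := ⨆ n, g n with hα
        have hle : ∀ n, g n ≤ α := Ordinal.le_iSup g
        have hακ : α < κ.ord := by
          rw [hα]
          refine Ordinal.iSup_lt_ord_lift ?_ fun n => (hglt n).1
          rw [hcof]
          simpa using hunc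
        have hbα : b < α := (Order.lt_succ b).trans_le
          (by rw [← Ordinal.add_one_eq_succ, ← hg0]; exact hle 0)
        refine ⟨α, ⟨hακ, ?_, ?_⟩, hbα⟩
        · intro γ hγ
          obtain ⟨n, hn⟩ := Ordinal.lt_iSup_iff.1 hγ
          obtain ⟨ε, hεC, hgε, hεg⟩ := (hspec n).1
          exact ⟨ε, hεC, hn.trans hgε, hεg.trans_le (hle (n+1))⟩
        · intro γ hγ
          obtain ⟨n, hn⟩ := Ordinal.lt_iSup_iff.1 hγ
          obtain ⟨ε, hεA, hεB, hgε, hεg⟩ := (hspec n).2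
          exact ⟨ε, hεA, hεB, hn.trans hgε, hεg.trans_le (hle (n+1))⟩
      · -- closed
        intro b hb hb0 hlim
        refine ⟨hb, ?_, ?_⟩
        · intro γ hγ
          obtain ⟨ε, hεE, hγε, hεb⟩ := hlim γ hγ
          obtain ⟨ε', hε'C, hγε', hε'ε⟩ := hεE.2.1 γ hγε
          exact ⟨ε', hε'C, hγε', hε'ε.trans hεb⟩
        · intro γ hγ
          obtain ⟨ε, hεE, hγε, hεb⟩ := hlim γ hγ
          obtain ⟨ε', hε'A, hε'B, hγε', hε'ε⟩ := hεE.2.2 γ hγε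
          exact ⟨ε', hε'A, hε'B, hγε', hε'ε.trans hεb⟩
    have hABsub : A \ B ⊆ Set.Iio κ.ord := fun x hx => hA hx.1
    obtain ⟨α, ⟨hακ, hαcof, hαD⟩, hαE⟩ := hdiamond (A \ B) hABsub E hEclub
    have hα0 : α ≠ 0 := by
      intro h
      rw [h, Ordinal.cof_zero] at hαcof
      exact hlam0 hαcof.symm
    have hαC : α ∈ C := hCcl α hακ hαcof hαE.2.1
    refine ⟨α, ⟨⟨hακ, hαcof, 0, pos_iff_ne_zero.2 hα0, ?_⟩, ?_⟩, hαC⟩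
    · intro γ hγ _
      rw [← hαD] at hγ
      exact hγ.1.1
    · rintro ⟨-, -, β, hβα, hsub⟩
      obtain ⟨ε, hεA, hεB, hβε, hεα⟩ := hαE.2.2 β hβα
      have hεD : ε ∈ D α := by
        rw [← hαD]
        exact ⟨⟨hεA, hεB⟩, hεα⟩
      exact hεB (hsub ε hεD hβε.le)
end
end

section
/- Let κ be regular uncountable. Suppose the non-stationary ideal on κ is not κ^+-saturated, witnessed by a sequence ⟨A_i : i < κ^+⟩ of stationary subsets of κ such that A_i ∩ A_j is non-stationary for all i ≠ j. Then there exists a sequence ⟨B_α : α < κ^+⟩ of subsets of κ that is strictly increasing modulo the non-stationary ideal: for α < β < κ^+, B_α \ B_β is non-stationary and B_β \ B_α is stationary. -/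
open Cardinal Set
open scoped Classical

noncomputable section

section Aux

variable {δ : Ordinal}

lemma natSup_lt (hcof : ℵ₀ < δ.cof) {s : ℕ → Ordinal} (h : ∀ n, s n < δ) :
    (⨆ n, s n) < δ :=
  Ordinal.iSup_lt_ord_lift (f := s) (c := δ) (by rw [Cardinal.mk_nat, Cardinal.lift_aleph0]; exact hcof) h

lemma lt_natSup {s : ℕ → Ordinal} (hmono : ∀ n, s n < s (n + 1)) (n : ℕ) :
    s n < ⨆ n, s n :=
  (hmono n).trans_le (Ordinal.le_iSup s (n + 1))

lemma mem_of_natSup (hcof : ℵ₀ < δ.cof) {C : Set Ordinal} (hC : IsClubIn C δ)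
    {s : ℕ → Ordinal} (hlt : ∀ n, s n < δ) (hmono : ∀ n, s n < s (n + 1))
    (hw : ∀ n, ∃ ε ∈ C, s n < ε ∧ ε ≤ s (n + 1)) : (⨆ n, s n) ∈ C := by
  have hL : (⨆ n, s n) < δ := natSup_lt hcof hlt
  refine hC.2.2 _ hL ?_ ?_
  · exact ((zero_le (a := s 0)).trans_lt (lt_natSup hmono 0)).ne'
  · intro γ hγ
    obtain ⟨n, hn⟩ := Ordinal.lt_iSup_iff.mp hγ
    obtain ⟨ε, hεC, hsε, hεs⟩ := hw n
    exact ⟨ε, hεC, hn.trans hsε, hεs.trans_lt (lt_natSup hmono (n + 1))⟩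

lemma clubIio (hδ : Order.IsSuccLimit δ) : IsClubIn (Set.Iio δ) δ :=
  ⟨le_refl _, fun β hβ => ⟨β + 1, hδ.succ_lt hβ, lt_add_one β⟩, fun β hβ _ _ => hβ⟩

lemma clubIoi (hδ : Order.IsSuccLimit δ) {j : Ordinal} (hj : j < δ) :
    IsClubIn (Set.Ioi j ∩ Set.Iio δ) δ := by
  refine ⟨fun x hx => hx.2, fun β hβ => ?_, fun β hβ hβ0 hlim => ?_⟩
  · exact ⟨max β j + 1, ⟨(le_max_right β j).trans_lt (lt_add_one _),
      hδ.succ_lt (max_lt hβ hj)⟩, (le_max_left β j).trans_lt (lt_add_one _)⟩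
  · refine ⟨?_, hβ⟩
    by_contra hno
    obtain ⟨ε, hεC, _, hεβ⟩ := hlim 0 (pos_iff_ne_zero.mpr hβ0)
    exact absurd (hεβ.trans_le (not_lt.mp hno)) (not_lt.mpr hεC.1.le)

lemma clubInter (hcof : ℵ₀ < δ.cof) {C₁ C₂ : Set Ordinal}
    (h1 : IsClubIn C₁ δ) (h2 : IsClubIn C₂ δ) : IsClubIn (C₁ ∩ C₂) δ := by
  classical
  refine ⟨fun x hx => h1.1 hx.1, ?_, ?_⟩
  · intro β hβ
    -- pick functions
    have pick : ∀ (C : Set Ordinal), IsClubIn C δ → ∀ η, ∃ ε, η < δ → (ε ∈ C ∧ η < ε) := by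
      intro C hC η
      by_cases h : η < δ
      · obtain ⟨ε, hε1, hε2⟩ := hC.2.1 η h
        exact ⟨ε, fun _ => ⟨hε1, hε2⟩⟩
      · exact ⟨0, fun h' => absurd h' h⟩
    choose c₁ hc₁ using pick C₁ h1
    choose c₂ hc₂ using pick C₂ h2
    set nxt : Ordinal → Ordinal := fun η => max (c₁ η) (c₂ η) with hnxt
    set s : ℕ → Ordinal := fun n => nxt^[n] β with hs
    have hstep : ∀ n, s (n + 1) = nxt (s n) := fun n => Function.iterate_succ_apply' nxt n β
    have hkey : ∀ n, s n < δ ∧ s n < s (n + 1) := by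
      intro n
      induction n with
      | zero =>
        refine ⟨hβ, ?_⟩
        rw [hstep]
        exact ((hc₁ (s 0) hβ).2).trans_le (le_max_left _ _)
      | succ n ih =>
        have h1' : s (n + 1) < δ := by
          rw [hstep]
          exact max_lt (h1.1 (hc₁ (s n) ih.1).1) (h2.1 (hc₂ (s n) ih.1).1)
        refine ⟨h1', ?_⟩
        rw [hstep (n+1)]
        exact ((hc₁ _ h1').2).trans_le (le_max_left _ _)
    have hlt : ∀ n, s n < δ := fun n => (hkey n).1
    have hmono : ∀ n, s n < s (n + 1) := fun n => (hkey n).2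
    refine ⟨⨆ n, s n, ⟨?_, ?_⟩, lt_natSup hmono 0⟩
    · refine mem_of_natSup hcof h1 hlt hmono fun n => ?_
      refine ⟨c₁ (s n), (hc₁ _ (hlt n)).1, (hc₁ _ (hlt n)).2, ?_⟩
      rw [hstep]; exact le_max_left _ _
    · refine mem_of_natSup hcof h2 hlt hmono fun n => ?_
      refine ⟨c₂ (s n), (hc₂ _ (hlt n)).1, (hc₂ _ (hlt n)).2, ?_⟩
      rw [hstep]; exact le_max_right _ _
  · intro β hβ hβ0 hlim
    constructor
    · refine h1.2.2 β hβ hβ0 fun γ hγ => ?_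
      obtain ⟨ε, hε, h1', h2'⟩ := hlim γ hγ
      exact ⟨ε, hε.1, h1', h2'⟩
    · refine h2.2.2 β hβ hβ0 fun γ hγ => ?_
      obtain ⟨ε, hε, h1', h2'⟩ := hlim γ hγ
      exact ⟨ε, hε.2, h1', h2'⟩

end Aux
section Diag

variable {δ : Ordinal}

lemma clubDiag (hδ : Order.IsSuccLimit δ) (hcof : ℵ₀ < δ.cof) (hcard : ∀ ξ < δ, ξ.card < δ.cof)
    {F : Ordinal → Set Ordinal} (hF : ∀ x, IsClubIn (F x) δ) :
    IsClubIn {ξ | ξ < δ ∧ ∀ x < ξ, ξ ∈ F x} δ := by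
  classical
  constructor
  · exact fun ξ hξ => hξ.1
  constructor
  · -- unbounded
    intro β hβ
    -- pick functions for each club
    have pick : ∀ (x : Ordinal) (η : Ordinal), ∃ ε, η < δ → (ε ∈ F x ∧ η < ε) := by
      intro x η
      by_cases h : η < δ
      · obtain ⟨ε, hε1, hε2⟩ := (hF x).2.1 η h
        exact ⟨ε, fun _ => ⟨hε1, hε2⟩⟩
      · exact ⟨0, fun h' => absurd h' h⟩
    choose c hc using pick
    -- for each ξ < δ, a member of ⋂_{x<ξ} F x above ξ
    have key : ∀ ξ < δ, ∃ L, ξ < L ∧ L < δ ∧ ∀ x < ξ, L ∈ F x := by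
      intro ξ hξ
      set nxt : Ordinal → Ordinal := fun η =>
        max (η + 1) (Ordinal.bsup ξ fun x _ => c x η) with hnxt
      have hnxtlt : ∀ η < δ, nxt η < δ := by
        intro η hη
        refine max_lt (hδ.succ_lt hη) (Ordinal.bsup_lt_ord (hcard ξ hξ) ?_)
        exact fun x hx => (hF x).1 (hc x η hη).1
      have hnxtgt : ∀ η, η < nxt η := fun η => (lt_add_one η).trans_le (le_max_left _ _)
      set s : ℕ → Ordinal := fun n => nxt^[n] ξ with hs
      have hstep : ∀ n, s (n + 1) = nxt (s n) := fun n => Function.iterate_succ_apply' nxt n ξ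
      have hlt : ∀ n, s n < δ := by
        intro n
        induction n with
        | zero => exact hξ
        | succ n ih => rw [hstep]; exact hnxtlt _ ih
      have hmono : ∀ n, s n < s (n + 1) := by
        intro n; rw [hstep]; exact hnxtgt _
      refine ⟨⨆ n, s n, lt_natSup hmono 0, natSup_lt hcof hlt, fun x hx => ?_⟩
      refine mem_of_natSup hcof (hF x) hlt hmono fun n => ?_
      refine ⟨c x (s n), (hc x _ (hlt n)).1, (hc x _ (hlt n)).2, ?_⟩
      rw [hstep]
      exact (Ordinal.le_bsup (fun x _ => c x (s n)) x hx).trans (le_max_right _ _)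
    choose e he1 he2 he3 using key
    -- now iterate e
    set e' : Ordinal → Ordinal := fun η => if h : η < δ then e η h else 0 with he'
    set s : ℕ → Ordinal := fun n => e'^[n] β with hs
    have hstep : ∀ n, s (n + 1) = e' (s n) := fun n => Function.iterate_succ_apply' e' n β
    have hlt : ∀ n, s n < δ := by
      intro n
      induction n with
      | zero => exact hβ
      | succ n ih => rw [hstep]; simp only [he', dif_pos ih]; exact he2 _ ih
    have hmono : ∀ n, s n < s (n + 1) := by
      intro n; rw [hstep]; simp only [he', dif_pos (hlt n)]; exact he1 _ (hlt n)
    have hLδ : (⨆ n, s n) < δ := natSup_lt hcof hlt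
    refine ⟨⨆ n, s n, ⟨hLδ, fun x hx => ?_⟩, lt_natSup hmono 0⟩
    obtain ⟨n, hn⟩ := Ordinal.lt_iSup_iff.mp hx
    refine (hF x).2.2 _ hLδ ((zero_le (a := s 0)).trans_lt (lt_natSup hmono 0)).ne' ?_
    intro γ hγ
    obtain ⟨m, hm⟩ := Ordinal.lt_iSup_iff.mp hγ
    set k := max n m with hk
    have hsk : s (k + 1) ∈ F x := by
      rw [hstep]
      simp only [he', dif_pos (hlt k)]
      refine he3 _ (hlt k) x (hn.trans_le ?_)
      have : ∀ a b : ℕ, a ≤ b → s a ≤ s b := fun a b hab =>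
        monotone_nat_of_le_succ (fun n => (hmono n).le) hab
      exact this n k (le_max_left n m)
    refine ⟨s (k + 1), hsk, ?_, lt_natSup hmono (k + 1)⟩
    have : ∀ a b : ℕ, a ≤ b → s a ≤ s b := fun a b hab =>
      monotone_nat_of_le_succ (fun n => (hmono n).le) hab
    exact hm.trans_le ((this m k (le_max_right n m)).trans (hmono k).le)
  · -- closed
    intro β hβ hβ0 hlim
    refine ⟨hβ, fun x hx => ?_⟩
    refine (hF x).2.2 β hβ hβ0 fun γ hγ => ?_
    obtain ⟨ε, hεD, hγε, hεβ⟩ := hlim (max γ x) (max_lt hγ hx)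
    exact ⟨ε, hεD.2 x ((le_max_right γ x).trans_lt hγε), (le_max_left γ x).trans_lt hγε, hεβ⟩

end Diag
lemma exists_surj (κ : Cardinal) {α : Ordinal} (h0 : 0 < α) (hα : α.card ≤ κ) :
    ∃ g : Ordinal → Ordinal, (∀ y, g y < α) ∧ ∀ γ < α, ∃ y < κ.ord, g y = γ := by
  classical
  have h1 : #(Set.Iio α) ≤ #(Set.Iio κ.ord) := by
    rw [Ordinal.mk_Iio_ordinal, Ordinal.mk_Iio_ordinal, Cardinal.card_ord]
    exact Cardinal.lift_le.mpr hα
  obtain ⟨f⟩ := h1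
  refine ⟨fun y => if h : ∃ p : Set.Iio α, ((f p : Ordinal) = y) then (h.choose : Ordinal) else 0,
    fun y => ?_, fun γ hγ => ?_⟩
  · by_cases h : ∃ p : Set.Iio α, ((f p : Ordinal) = y)
    · simp only [dif_pos h]; exact h.choose.2
    · simp only [dif_neg h]; exact h0
  · have hex : ∃ p : Set.Iio α, ((f p : Ordinal) = (f ⟨γ, hγ⟩ : Ordinal)) := ⟨⟨γ, hγ⟩, rfl⟩
    refine ⟨(f ⟨γ, hγ⟩ : Ordinal), (f ⟨γ, hγ⟩).2, ?_⟩
    simp only [dif_pos hex]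
    have := hex.choose_spec
    have h2 : hex.choose = ⟨γ, hγ⟩ := f.injective (Subtype.coe_injective this)
    rw [h2]

/-- if the non-stationary ideal on `κ` is not `κ⁺`-saturated, witnessed by
`κ⁺` many stationary sets with pairwise non-stationary intersections, then there is a
`κ⁺`-chain of subsets of `κ` strictly increasing modulo the non-stationary ideal. -/
theorem nonsaturated_chain (κ : Cardinal) (hreg : κ.IsRegular) (hunc : ℵ₀ < κ)
    (A : Ordinal → Set Ordinal)
    (hA : ∀ i < (Order.succ κ).ord, A i ⊆ Set.Iio κ.ord ∧ StatIn (A i) κ.ord)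
    (hpair : ∀ i < (Order.succ κ).ord, ∀ j < (Order.succ κ).ord, i ≠ j →
      ¬ StatIn (A i ∩ A j) κ.ord) :
    ∃ B : Ordinal → Set Ordinal,
      (∀ i < (Order.succ κ).ord, B i ⊆ Set.Iio κ.ord) ∧
      ∀ i j, i < j → j < (Order.succ κ).ord →
        ¬ StatIn (B i \ B j) κ.ord ∧ StatIn (B j \ B i) κ.ord := by
  classical
  have hκω : ℵ₀ ≤ κ := hunc.le
  have hδlim : Order.IsSuccLimit κ.ord := Cardinal.isSuccLimit_ord hκω
  have hcofω : ℵ₀ < κ.ord.cof := by rw [hreg.cof_eq]; exact hunc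
  have hcard : ∀ ξ < κ.ord, ξ.card < κ.ord.cof := fun ξ hξ => by
    rw [hreg.cof_eq]; exact Cardinal.lt_ord.mp hξ
  have hGex : ∀ α : Ordinal, ∃ g : Ordinal → Ordinal,
      0 < α → α < (Order.succ κ).ord → (∀ y, g y < α) ∧ ∀ γ < α, ∃ y < κ.ord, g y = γ := by
    intro α
    by_cases h : 0 < α ∧ α < (Order.succ κ).ord
    · have hcard' : α.card ≤ κ := Order.lt_succ_iff.mp (Cardinal.lt_ord.mp h.2)
      obtain ⟨g, hg⟩ := exists_surj κ h.1 hcard'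
      exact ⟨g, fun _ _ => hg⟩
    · exact ⟨fun _ => 0, fun h1 h2 => absurd ⟨h1, h2⟩ h⟩
  choose G hG using hGex
  refine ⟨fun α => {ξ | ξ < κ.ord ∧ ∃ x < ξ, G α x < α ∧ ξ ∈ A (G α x)},
    fun i _ ξ hξ => hξ.1, fun i j hij hj => ⟨?_, ?_⟩⟩
  · -- B i \ B j is nonstationary
    have hj0 : 0 < j := (zero_le (a := i)).trans_lt hij
    have hGj := hG j hj0 hj
    have hpick : ∀ x, ∃ y, y < κ.ord ∧ (G i x < i → G j y = G i x) := by
      intro x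
      by_cases hx : G i x < i
      · obtain ⟨y, hy1, hy2⟩ := hGj.2 (G i x) (hx.trans hij)
        exact ⟨y, hy1, fun _ => hy2⟩
      · exact ⟨0, hδlim.pos, fun h' => absurd h' hx⟩
    choose h hh1 hh2 using hpick
    have hCclub : IsClubIn {ξ | ξ < κ.ord ∧ ∀ x < ξ, ξ ∈ (Set.Ioi (h x) ∩ Set.Iio κ.ord)}
        κ.ord := clubDiag hδlim hcofω hcard fun x => clubIoi hδlim (hh1 x)
    intro hstat
    obtain ⟨ξ, hξBD, hξC⟩ := hstat _ hCclub
    obtain ⟨hξBi, hξBj⟩ := hξBD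
    obtain ⟨hξδ, x, hxξ, hGx, hξA⟩ := hξBi
    refine hξBj ⟨hξδ, h x, ?_, ?_, ?_⟩
    · exact (hξC.2 x hxξ).1
    · rw [hh2 x hGx]; exact hGx.trans hij
    · rw [hh2 x hGx]; exact hξA
  · -- B j \ B i is stationary
    intro C₀ hC₀
    have hi : i < (Order.succ κ).ord := hij.trans hj
    have hj0 : 0 < j := (zero_le (a := i)).trans_lt hij
    have hW : ∀ x, ∃ W : Set Ordinal, IsClubIn W κ.ord ∧
        (G i x < i → (A (G i x) ∩ A i) ∩ W = ∅) := by
      intro x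
      by_cases hx : G i x < i
      · have hns := hpair (G i x) (hx.trans hi) i hi hx.ne
        unfold StatIn at hns
        push_neg at hns
        obtain ⟨Wx, hW1, hW2⟩ := hns
        exact ⟨Wx, hW1, fun _ => hW2⟩
      · exact ⟨Set.Iio κ.ord, clubIio hδlim, fun h' => absurd h' hx⟩
    choose W hW1 hW2 using hW
    have hDclub : IsClubIn {ξ | ξ < κ.ord ∧ ∀ x < ξ, ξ ∈ W x} κ.ord :=
      clubDiag hδlim hcofω hcard hW1
    obtain ⟨y₀, hy₀δ, hy₀⟩ := (hG j hj0 hj).2 i hij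
    have hEclub := clubIoi hδlim hy₀δ
    have hGG : IsClubIn (C₀ ∩ ({ξ | ξ < κ.ord ∧ ∀ x < ξ, ξ ∈ W x} ∩
        (Set.Ioi y₀ ∩ Set.Iio κ.ord))) κ.ord :=
      clubInter hcofω hC₀ (clubInter hcofω hDclub hEclub)
    obtain ⟨ξ, hξA, hξG⟩ := (hA i hi).2 _ hGG
    obtain ⟨hξC₀, hξD, hξE⟩ := hξG
    refine ⟨ξ, ⟨⟨hξE.2, y₀, hξE.1, ?_, ?_⟩, ?_⟩, hξC₀⟩
    · rw [hy₀]; exact hij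
    · rw [hy₀]; exact hξA
    · rintro ⟨-, x, hxξ, hGx, hξAx⟩
      exact Set.eq_empty_iff_forall_notMem.mp (hW2 x hGx) ξ ⟨⟨hξAx, hξA⟩, hξD.2 x hxξ⟩
end
end

section
/- Let κ be an uncountable regular cardinal with κ^{<κ} = κ, and let S ⊆ lim(κ) be non-stationary, with C a club subset of κ disjoint from S. Define f : 2^κ → 2^κ by f(η)(α) = η(OTP(α ∩ C)) if α ∈ C and f(η)(α) = 0 otherwise. Then f is a continuous reduction of E_0 to E_S: for all η, ξ ∈ 2^κ, {α : η(α) ≠ ξ(α)} is bounded iff f(η) E_S f(ξ), where E_S = E_S^* ∩ E_0 and η E_S^* ξ iff for every α ∈ S there is β < α with η△ξ constant on (β, α). -/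
open Cardinal Set
open scoped Classical

noncomputable section

/-- The order type of a (bounded) set of ordinals, as an ordinal. -/
noncomputable def otp (s : Set Ordinal) : Ordinal :=
  sInf {o : Ordinal | Ordinal.lift.{1, 0} o =
    Ordinal.type (Subrel ((· < ·) : Ordinal → Ordinal → Prop) (· ∈ s))}

namespace OtpAux

local notation "lt0" => ((· < ·) : Ordinal → Ordinal → Prop)

lemma type_le_of_subset {s u : Set Ordinal} (h : s ⊆ u) :
    Ordinal.type (Subrel lt0 (· ∈ s)) ≤ Ordinal.type (Subrel lt0 (· ∈ u)) := by
  refine RelEmbedding.ordinal_type_le ⟨⟨fun x => ⟨x.1, h x.2⟩, ?_⟩, ?_⟩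
  · intro x y hxy
    simpa [Subtype.ext_iff] using hxy
  · intro x y
    exact Iff.rfl

lemma exists_lift {s : Set Ordinal} {a : Ordinal} (h : s ⊆ Iio a) :
    ∃ o ≤ a, Ordinal.lift.{1, 0} o = Ordinal.type (Subrel lt0 (· ∈ s)) := by
  have h1 : Ordinal.type (Subrel lt0 (· ∈ s)) ≤ Ordinal.lift.{1, 0} a := by
    have h2 := type_le_of_subset h
    change _ ≤ Ordinal.type (Subrel lt0 (· < a)) at h2
    rwa [Ordinal.type_subrel,
      Ordinal.typein_ordinal] at h2
  obtain ⟨o, ho⟩ := Ordinal.mem_range_lift_of_le h1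
  exact ⟨o, by rw [← Ordinal.lift_le.{1, 0}, ho]; exact h1, ho⟩

lemma lift_otp {s : Set Ordinal} {a : Ordinal} (h : s ⊆ Iio a) :
    Ordinal.lift.{1, 0} (otp s) = Ordinal.type (Subrel lt0 (· ∈ s)) := by
  obtain ⟨o, _, ho⟩ := exists_lift h
  show otp s ∈ {o : Ordinal | Ordinal.lift.{1, 0} o = Ordinal.type (Subrel lt0 (· ∈ s))}
  exact csInf_mem ⟨o, ho⟩

lemma otp_le {s : Set Ordinal} {a : Ordinal} (h : s ⊆ Iio a) : otp s ≤ a := by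
  obtain ⟨o, hoa, ho⟩ := exists_lift h
  exact le_trans (csInf_le' ho) hoa

lemma otp_inter_le (s : Set Ordinal) (a : Ordinal) : otp (s ∩ Iio a) ≤ a :=
  otp_le inter_subset_right

lemma type_inter_eq_typein {s : Set Ordinal} {a b : Ordinal} (hb : b ∈ s) (hba : b < a) :
    Ordinal.type (Subrel lt0 (· ∈ s ∩ Iio b))
      = Ordinal.typein (Subrel lt0 (· ∈ s ∩ Iio a)) ⟨b, hb, hba⟩ := by
  rw [← Ordinal.type_subrel]
  refine RelIso.ordinal_type_eq
    ⟨Equiv.mk (fun x => ⟨⟨x.1, x.2.1, lt_trans x.2.2 hba⟩, x.2.2⟩)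
      (fun y => ⟨y.1.1, y.1.2.1, y.2⟩) (fun x => rfl) (fun y => rfl), Iff.rfl⟩

lemma otp_lt_otp {s : Set Ordinal} {a b : Ordinal} (hb : b ∈ s) (hba : b < a) :
    otp (s ∩ Iio b) < otp (s ∩ Iio a) := by
  rw [← Ordinal.lift_lt.{1, 0}, lift_otp (inter_subset_right (s := s) (t := Iio b)),
    lift_otp (inter_subset_right (s := s) (t := Iio a)), type_inter_eq_typein hb hba]
  exact Ordinal.typein_lt_type _ _

lemma otp_down {s : Set Ordinal} {a ι : Ordinal} (h : ι < otp (s ∩ Iio a)) :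
    ∃ b ∈ s, b < a ∧ otp (s ∩ Iio b) = ι := by
  have h' : Ordinal.lift.{1, 0} ι < Ordinal.type (Subrel lt0 (· ∈ s ∩ Iio a)) := by
    rw [← lift_otp (inter_subset_right (s := s) (t := Iio a))]
    exact Ordinal.lift_lt.2 h
  obtain ⟨⟨b, hbs, hba⟩, hx⟩ := Ordinal.typein_surj _ h'
  refine ⟨b, hbs, hba, ?_⟩
  have h2 := lift_otp (inter_subset_right (s := s) (t := Iio b))
  rw [type_inter_eq_typein hbs hba, hx] at h2
  exact Ordinal.lift_inj.1 h2

lemma otp_surj {κ : Cardinal} (hreg : κ.IsRegular) {C : Set Ordinal}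
    (hC : IsClubIn C κ.ord) : ∀ ι < κ.ord, ∃ α ∈ C, otp (C ∩ Iio α) = ι := by
  intro ι
  induction ι using Ordinal.induction with
  | h ι IH =>
    intro hι
    set g : ∀ j < ι, Ordinal := fun j hj => (IH j hj (hj.trans hι)).choose with hg
    have hgC : ∀ j hj, g j hj ∈ C := fun j hj => (IH j hj (hj.trans hι)).choose_spec.1
    have hgt : ∀ j hj, otp (C ∩ Iio (g j hj)) = j :=
      fun j hj => (IH j hj (hj.trans hι)).choose_spec.2
    have hblt : Ordinal.bsup ι g < κ.ord :=
      Ordinal.bsup_lt_ord (by rw [hreg.cof_eq]; exact Cardinal.lt_ord.1 hι)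
        (fun j hj => hC.1 (hgC j hj))
    obtain ⟨α, hαC, hαgt⟩ := hC.2.1 _ hblt
    have hle : ι ≤ otp (C ∩ Iio α) := by
      by_contra hlt
      push_neg at hlt
      have h1 : otp (C ∩ Iio (g _ hlt)) < otp (C ∩ Iio α) :=
        otp_lt_otp (hgC _ hlt) ((Ordinal.le_bsup g _ hlt).trans_lt hαgt)
      rw [hgt _ hlt] at h1
      exact lt_irrefl _ h1
    rcases eq_or_lt_of_le hle with heq | hlt
    · exact ⟨α, hαC, heq.symm⟩
    · obtain ⟨b, hbC, _, hb⟩ := otp_down hlt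
      exact ⟨b, hbC, hb⟩

end OtpAux

/-- if `S` is non-stationary, witnessed by a club `C` disjoint from `S`,
then `η ↦ (α ↦ η(OTP(C ∩ α))` for `α ∈ C`, else `0)` is a continuous reduction of `E_0`
to `E_S = E_S^* ∩ E_0`. -/
theorem E0_reducible_to_ES_of_nonstationary (κ : Cardinal) (hreg : κ.IsRegular)
    (hunc : ℵ₀ < κ) (hpow : κ ^< κ = κ)
    (S : Set Ordinal) (hS : S ⊆ {β | β < κ.ord ∧ Order.IsSuccLimit β})
    (C : Set Ordinal) (hC : IsClubIn C κ.ord) (hCS : Disjoint C S) :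
    @Continuous _ _ (gbTop κ Bool) (gbTop κ Bool)
      (fun η α => if α ∈ C then η (otp (C ∩ Set.Iio α)) else false) ∧
    ∀ η ξ : Ordinal → Bool,
      E0 κ η ξ ↔
        (EStar S (fun α => if α ∈ C then η (otp (C ∩ Set.Iio α)) else false)
            (fun α => if α ∈ C then ξ (otp (C ∩ Set.Iio α)) else false) ∧
          E0 κ (fun α => if α ∈ C then η (otp (C ∩ Set.Iio α)) else false)
            (fun α => if α ∈ C then ξ (otp (C ∩ Set.Iio α)) else false)) := by
  set f : (Ordinal → Bool) → Ordinal → Bool :=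
    fun η α => if α ∈ C then η (otp (C ∩ Set.Iio α)) else false with hf
  constructor
  · -- Continuity
    unfold gbTop
    rw [continuous_generateFrom_iff]
    rintro s ⟨α, hα, p, rfl⟩
    have hpre : f ⁻¹' {η | ∀ β < α, η β = p β}
        = ⋃₀ {u | ∃ η0 ∈ f ⁻¹' {η | ∀ β < α, η β = p β},
            u = {η | ∀ γ < α, η γ = η0 γ}} := by
      ext η
      constructor
      · intro hη
        exact ⟨{η' | ∀ γ < α, η' γ = η γ}, ⟨η, hη, rfl⟩, fun γ _ => rfl⟩
      · rintro ⟨u, ⟨η0, hη0, rfl⟩, hmem⟩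
        intro β hβ
        have hfeq : f η β = f η0 β := by
          by_cases hβC : β ∈ C
          · simp only [hf, if_pos hβC]
            exact hmem _ (lt_of_le_of_lt (OtpAux.otp_inter_le C β) hβ)
          · simp only [hf, if_neg hβC]
        rw [hfeq]
        exact hη0 β hβ
    rw [hpre]
    exact TopologicalSpace.GenerateOpen.sUnion _
      (by rintro u ⟨η0, _, rfl⟩; exact TopologicalSpace.GenerateOpen.basic _ ⟨α, hα, η0, rfl⟩)
  · intro η ξ
    constructor
    · rintro ⟨α0, hα0, hηξ⟩
      constructor
      · -- EStar
        intro α hαS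
        obtain ⟨hακ, hαlim⟩ := hS hαS
        have hαC : α ∉ C := fun h => Set.disjoint_left.1 hCS h hαS
        by_cases hub : ∀ γ < α, ∃ ε ∈ C, γ < ε ∧ ε < α
        · exact absurd (hC.2.2 α hακ hαlim.bot_lt.ne' hub) hαC
        · push_neg at hub
          obtain ⟨β, hβα, hno⟩ := hub
          refine ⟨β, hβα, false, fun γ hβγ hγα => ?_⟩
          have hγC : γ ∉ C := fun hγ => (hno γ hγ hβγ).not_gt hγα
          simp [hf, hγC]
      · -- E0 of images
        obtain ⟨β0, hβ0C, hβ0⟩ := OtpAux.otp_surj hreg hC α0 hα0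
        refine ⟨β0, hC.1 hβ0C, fun α hβ0α hακ => ?_⟩
        by_cases hαC : α ∈ C
        · simp only [hf, if_pos hαC]
          have hge : α0 ≤ otp (C ∩ Set.Iio α) := by
            rcases eq_or_lt_of_le hβ0α with heq | hlt
            · rw [← heq, hβ0]
            · exact le_of_lt (hβ0 ▸ OtpAux.otp_lt_otp hβ0C hlt)
          exact hηξ _ hge (lt_of_le_of_lt (OtpAux.otp_inter_le C α) hακ)
        · simp only [hf, if_neg hαC]
    · rintro ⟨-, β0, hβ0, hfeq⟩
      refine ⟨otp (C ∩ Set.Iio β0), lt_of_le_of_lt (OtpAux.otp_inter_le C β0) hβ0,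
        fun ι hι hικ => ?_⟩
      obtain ⟨α, hαC, hα⟩ := OtpAux.otp_surj hreg hC ι hικ
      have hβ0α : β0 ≤ α := by
        by_contra hlt
        push_neg at hlt
        have := OtpAux.otp_lt_otp hαC hlt
        rw [hα] at this
        exact absurd (lt_of_lt_of_le this hι) (lt_irrefl ι)
      have := hfeq α hβ0α (hC.1 hαC)
      simpa only [hf, if_pos hαC, hα] using this
end
end

section
/- Let λ > ω be regular, κ = λ^+, and suppose ⟨C_α : α ∈ S^κ_{≤λ}⟩ is a □_λ-sequence (C_α club in α; C_β = β ∩ C_α for β ∈ lim C_α; |C_α| < λ when cf(α) < λ). Define D_α = {C_α ∩ β : β < α} for each α < κ. Then the sequence ⟨D_α : α < κ⟩ witnesses that S^κ_λ belongs to the ideal I[κ]: |D_α| < κ for all α, and for every α ∈ S^κ_λ the set E = C_α is unbounded in α of order type cf(α) = λ, and for every β < α there is γ < α with E ∩ β ∈ D_γ. -/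
open Cardinal Set
open scoped Classical

noncomputable section

/-- The set of (nonzero) limit points of a set of ordinals. -/
def limPts (C : Set Ordinal) : Set Ordinal :=
  {β | β ≠ 0 ∧ ∀ γ < β, ∃ ε ∈ C, γ < ε ∧ ε < β}

theorem type_eq_lsub_typein {α : Type u} (r : α → α → Prop) [IsWellOrder α r] :
    Ordinal.type r = Ordinal.lsub (fun a => Ordinal.typein r a) := by
  apply le_antisymm
  · by_contra h
    push_neg at h
    obtain ⟨x, hx⟩ := Ordinal.typein_surj r h
    exact absurd (hx ▸ Ordinal.lt_lsub (fun a => Ordinal.typein r a) x) (lt_irrefl _)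
  · exact Ordinal.lsub_le fun a => Ordinal.typein_lt_type r a

/-- from a `□_λ`-sequence on `κ = λ⁺` (`λ > ω` regular), the sets
`D_α = {C_α ∩ β | β < α}` witness `S^κ_λ ∈ I[κ]`: each `|D_α| < κ`, and for every
`α ∈ S^κ_λ` the set `E = C_α` is unbounded in `α`, has order type `λ = cf(α)`, and all
its proper initial segments appear in some `D_γ`, `γ < α`. -/
theorem square_witnesses_approachability (lam κ : Cardinal) (hlam : lam.IsRegular)
    (hunc : ℵ₀ < lam) (hκ : κ = Order.succ lam)
    (C : Ordinal → Set Ordinal)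
    (hclub : ∀ α, α < κ.ord → Order.IsSuccLimit α → α.cof ≤ lam → IsClubIn (C α) α)
    (hcoh : ∀ α, α < κ.ord → Order.IsSuccLimit α → α.cof ≤ lam →
      ∀ β ∈ limPts (C α), C β = C α ∩ Set.Iio β)
    (hsize : ∀ α, α < κ.ord → Order.IsSuccLimit α → α.cof < lam →
      Cardinal.mk ↥(C α) < Cardinal.lift.{1, 0} lam) :
    (∀ α < κ.ord,
      Cardinal.mk ↥{s : Set Ordinal | ∃ β < α, s = C α ∩ Set.Iio β} <
        Cardinal.lift.{1, 0} κ) ∧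
    ∀ α, α < κ.ord → α.cof = lam →
      (∀ β < α, ∃ γ ∈ C α, β < γ) ∧ otp (C α) = lam.ord ∧
        ∀ β < α, ∃ γ < α, C α ∩ Set.Iio β ∈
          {s : Set Ordinal | ∃ δ < γ, s = C γ ∩ Set.Iio δ} := by
  constructor
  · intro α hα
    have himg : {s : Set Ordinal | ∃ β < α, s = C α ∩ Set.Iio β} =
        (fun β => C α ∩ Set.Iio β) '' Set.Iio α := by
      ext s
      constructor
      · rintro ⟨β, hβ, rfl⟩; exact ⟨β, hβ, rfl⟩
      · rintro ⟨β, hβ, rfl⟩; exact ⟨β, hβ, rfl⟩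
    rw [himg]
    calc #((fun β => C α ∩ Set.Iio β) '' Set.Iio α) ≤ #(Set.Iio α) := mk_image_le
      _ = Cardinal.lift.{1, 0} α.card := Ordinal.mk_Iio_ordinal α
      _ < Cardinal.lift.{1, 0} κ := Cardinal.lift_lt.2 (Cardinal.lt_ord.1 hα)
  · intro α hα hcof
    have hαlim : Order.IsSuccLimit α := Ordinal.aleph0_le_cof.1 (by rw [hcof]; exact hunc.le)
    have hcle : α.cof ≤ lam := hcof.le
    obtain ⟨hsub, hunb, hcls⟩ := hclub α hα hαlim hcle
    -- step function
    have step : ∀ β, β < α → ∃ γ, γ ∈ C α ∧ β < γ ∧ γ < α := fun β hβ => by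
      obtain ⟨γ, h1, h2⟩ := hunb β hβ
      exact ⟨γ, h1, h2, hsub h1⟩
    let nxt : Ordinal → Ordinal := fun β => if h : β < α then (step β h).choose else 0
    have hnxt : ∀ β, β < α → nxt β ∈ C α ∧ β < nxt β ∧ nxt β < α := fun β h => by
      simp only [nxt, dif_pos h]
      exact (step β h).choose_spec
    -- limit points of cofinality < lam are unbounded
    have key : ∀ β, β < α → ∃ γ, γ ∈ limPts (C α) ∧ β < γ ∧ γ < α ∧ γ.cof < lam := by
      intro β hβ
      set g : ℕ → Ordinal := fun n => nxt^[n + 1] β with hg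
      have hprop : ∀ n, g n ∈ C α ∧ g n < α := by
        intro n
        induction n with
        | zero => exact ⟨(hnxt β hβ).1, (hnxt β hβ).2.2⟩
        | succ n ih =>
          have : g (n + 1) = nxt (g n) := Function.iterate_succ_apply' nxt (n + 1) β
          rw [this]
          exact ⟨(hnxt _ ih.2).1, (hnxt _ ih.2).2.2⟩
      have hmono : ∀ n, g n < g (n + 1) := by
        intro n
        have : g (n + 1) = nxt (g n) := Function.iterate_succ_apply' nxt (n + 1) β
        rw [this]
        exact (hnxt _ (hprop n).2).2.1
      have hβ0 : β < g 0 := (hnxt β hβ).2.1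
      set γ : Ordinal := ⨆ n, g n with hγ
      have hle : ∀ n, g n ≤ γ := Ordinal.le_iSup g
      have hltγ : ∀ n, g n < γ := fun n => lt_of_lt_of_le (hmono n) (hle (n + 1))
      have hγα : γ < α := by
        apply Ordinal.iSup_lt_ord _ fun n => (hprop n).2
        rw [hcof, Cardinal.mk_nat]
        exact hunc
      have hγlp : γ ∈ limPts (C α) := by
        refine ⟨?_, ?_⟩
        · exact (lt_of_le_of_lt (zero_le : (0 : Ordinal) ≤ β)
            (lt_of_lt_of_le hβ0 (hle 0))).ne'
        · intro δ hδ
          obtain ⟨n, hn⟩ := Ordinal.lt_iSup_iff.1 hδ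
          exact ⟨g n, (hprop n).1, hn, hltγ n⟩
      have hcofγ : γ.cof < lam := by
        have := Ordinal.cof_iSup_le hltγ
        rw [Cardinal.mk_nat] at this
        exact lt_of_le_of_lt this hunc
      exact ⟨γ, hγlp, lt_of_lt_of_le hβ0 (hle 0), hγα, hcofγ⟩
    -- limit points are limits
    have hlplim : ∀ γ ∈ limPts (C α), Order.IsSuccLimit γ := by
      intro γ hγ
      refine Ordinal.isSuccLimit_iff.2 ⟨hγ.1, Order.isSuccPrelimit_iff_succ_lt.2 fun a ha => ?_⟩
      obtain ⟨ε, _, haε, hεγ⟩ := hγ.2 a ha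
      exact lt_of_le_of_lt (Order.succ_le_of_lt haε) hεγ
    -- initial segments are small
    have hseg : ∀ β, β < α → #↥(C α ∩ Set.Iio β) < Cardinal.lift.{1, 0} lam := by
      intro β hβ
      obtain ⟨γ, hγlp, hβγ, hγα, hγcof⟩ := key β hβ
      have hC : C γ = C α ∩ Set.Iio γ := hcoh α hα hαlim hcle γ hγlp
      have hsz := hsize γ (hγα.trans hα) (hlplim γ hγlp) hγcof
      rw [hC] at hsz
      refine lt_of_le_of_lt (Cardinal.mk_le_mk_of_subset ?_) hsz
      intro x hx
      exact ⟨hx.1, hx.2.trans hβγ⟩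
    refine ⟨hunb, ?_, ?_⟩
    · -- order type = lam.ord
      have hT : Ordinal.type (Subrel ((· < ·) : Ordinal → Ordinal → Prop) (· ∈ C α)) =
          Ordinal.lift.{1, 0} lam.ord := by
        apply le_antisymm
        · rw [type_eq_lsub_typein]
          apply Ordinal.lsub_le
          intro x
          rw [Cardinal.lift_ord, Cardinal.lt_ord, Ordinal.card_typein]
          refine lt_of_le_of_lt (Cardinal.mk_le_of_injective
            (f := fun y : {y : ↥(C α) // Subrel ((· < ·) : Ordinal → Ordinal → Prop) (· ∈ C α) y x}
              => (⟨y.1.1, y.1.2, y.2⟩ : ↥(C α ∩ Set.Iio x.1))) ?_)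
            (hseg x.1 (hsub x.2))
          intro y z h
          simp only [Subtype.mk.injEq] at h
          exact Subtype.ext (Subtype.ext (Subtype.mk.inj h))
        · rw [Cardinal.lift_ord, Cardinal.ord_le, Ordinal.card_type]
          set f : ↥(C α) → Ordinal.{1} := fun x => Ordinal.lift.{1, 0} x.1 with hf
          have hls : Ordinal.lsub.{1, 1} f = Ordinal.lift.{1, 0} α := by
            apply le_antisymm
            · exact Ordinal.lsub_le fun x => Ordinal.lift_lt.2 (hsub x.2)
            · by_contra h
              push_neg at h
              obtain ⟨b, hb⟩ := Ordinal.mem_range_lift_of_le h.le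
              obtain ⟨δ, hδC, hδ⟩ := hunb b (Ordinal.lift_lt.1 (hb ▸ h))
              have h1 : f ⟨δ, hδC⟩ < Ordinal.lsub.{1, 1} f := Ordinal.lt_lsub.{1, 1} f ⟨δ, hδC⟩
              rw [← hb] at h1
              exact absurd (Ordinal.lift_lt.1 h1) (not_lt.2 hδ.le)
          have h2 : Cardinal.lift.{1, 0} lam = (Ordinal.lsub.{1, 1} f).cof := by
            rw [hls, ← Ordinal.lift_cof, hcof]
          rw [h2]
          exact Ordinal.cof_lsub_le.{1} f
      have hset : {o : Ordinal | Ordinal.lift.{1, 0} o =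
          Ordinal.type (Subrel ((· < ·) : Ordinal → Ordinal → Prop) (· ∈ C α))} = {lam.ord} := by
        ext o
        simp only [Set.mem_setOf_eq, Set.mem_singleton_iff, hT, Ordinal.lift_inj]
      rw [otp, hset, csInf_singleton]
    · -- initial segments appear
      intro β hβ
      obtain ⟨γ, hγlp, hβγ, hγα, _⟩ := key β hβ
      refine ⟨γ, hγα, β, hβγ, ?_⟩
      rw [hcoh α hα hαlim hcle γ hγlp, Set.inter_assoc, Set.Iio_inter_Iio,
        min_eq_right hβγ.le]
end
end
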